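/- arXiv:1810.06354 — 8 statements merged into one kernel-verified Lean document; each statement's English description precedes it below -/
import Mathlib

section
/- For every integer m ≥ 2, the independence number of the double vertex graph of the fan graph F_{m,1} equals ⌊m²/4⌋. -/
/-- The independence number of a graph: the supremum of sizes of independent sets. -/
noncomputable def indepNum {V : Type*} (G : SimpleGraph V) : ℕ :=
  sSup {n | ∃ s : Finset V, s.card = n ∧ ∀ a ∈ s, ∀ b ∈ s, ¬ G.Adj a b}

/-- The path graph on `n` vertices `0, 1, ..., n-1`. -/
def pathG (n : ℕ) : SimpleGraph (Fin n) :=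
  SimpleGraph.fromRel (fun i j => (i : ℕ) + 1 = (j : ℕ))

/-- The cycle graph on `n` vertices `0, 1, ..., n-1`. -/
def cycleG (n : ℕ) : SimpleGraph (Fin n) :=
  SimpleGraph.fromRel (fun i j => (i : ℕ) + 1 = (j : ℕ) ∨ ((i : ℕ) = 0 ∧ (j : ℕ) = n - 1))

/-- The join of a graph `G` with a single extra vertex. -/
def joinK1 {V : Type*} (G : SimpleGraph V) : SimpleGraph (V ⊕ Unit) :=
  SimpleGraph.fromRel (fun a b =>
    (∃ x y, G.Adj x y ∧ a = Sum.inl x ∧ b = Sum.inl y) ∨ (a.isLeft ∧ b.isRight))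

/-- The fan graph `F_{m,1} = P_m + K_1`. -/
def fanG (m : ℕ) : SimpleGraph (Fin m ⊕ Unit) := joinK1 (pathG m)

/-- The wheel graph `W_{m,1} = C_m + K_1`. -/
def wheelG (m : ℕ) : SimpleGraph (Fin m ⊕ Unit) := joinK1 (cycleG m)

/-- The `k`-token graph: vertices are `k`-subsets of `V(G)`, two subsets adjacent
whenever their symmetric difference is an edge of `G`. -/
def tokenGraph {V : Type*} [DecidableEq V] (k : ℕ) (G : SimpleGraph V) :
    SimpleGraph {A : Finset V // A.card = k} :=
  SimpleGraph.fromRel (fun A B => ∃ a b : V, G.Adj a b ∧ symmDiff A.1 B.1 = {a, b})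

/-- The double vertex graph `G^(2)`: the `2`-token graph of `G`. -/
def doubleVertexGraph {V : Type*} [DecidableEq V] (G : SimpleGraph V) :
    SimpleGraph {A : Finset V // A.card = 2} :=
  tokenGraph 2 G

/-- The pair graph (complete double vertex graph) `C(G)`: vertices are the 2-multisets
of `V(G)`; `{a,x}` and `{a,y}` (distinct) are adjacent iff `x` and `y` are adjacent in `G`. -/
def pairGraph {V : Type*} (G : SimpleGraph V) : SimpleGraph (Sym2 V) :=
  SimpleGraph.fromRel (fun s t => ∃ a x y : V, G.Adj x y ∧ s = Sym2.mk a x ∧ t = Sym2.mk a y)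

lemma pair_eq_pair' {α : Type*} [DecidableEq α] {a b c d : α} :
    ({a, b} : Finset α) = {c, d} ↔ (a = c ∧ b = d) ∨ (a = d ∧ b = c) := by
  constructor
  · intro h
    have ha : a ∈ ({c, d} : Finset α) := h ▸ (by simp)
    have hb : b ∈ ({c, d} : Finset α) := h ▸ (by simp)
    have hc : c ∈ ({a, b} : Finset α) := h ▸ (by simp)
    have hd : d ∈ ({a, b} : Finset α) := h ▸ (by simp)
    simp only [Finset.mem_insert, Finset.mem_singleton] at ha hb hc hd
    tauto
  · rintro (⟨rfl, rfl⟩ | ⟨rfl, rfl⟩)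
    · rfl
    · exact Finset.pair_comm a b

lemma symmDiff_pair' {α : Type*} [DecidableEq α] {x a b : α}
    (hxa : x ≠ a) (hxb : x ≠ b) (hab : a ≠ b) :
    symmDiff ({x, a} : Finset α) {x, b} = {a, b} := by
  ext v
  simp [Finset.mem_symmDiff]
  by_cases hv : v = x <;> by_cases h1 : v = a <;> by_cases h2 : v = b <;> subst_vars <;> tauto

lemma pair_subset_iff {α : Type*} [DecidableEq α] {x b : α} {B : Finset α} :
    ({x, b} : Finset α) ⊆ B ↔ x ∈ B ∧ b ∈ B := by simp [Finset.insert_subset_iff]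

lemma eq_pair_of_mem {α : Type*} [DecidableEq α] {x b : α} {B : Finset α}
    (hB : B.card = 2) (hx : x ∈ B) (hb : b ∈ B) (hxb : x ≠ b) : B = {x, b} := by
  have hsub : ({x, b} : Finset α) ⊆ B := pair_subset_iff.mpr ⟨hx, hb⟩
  have hcard : ({x, b} : Finset α).card = 2 := by
    rw [Finset.card_insert_of_notMem (by simpa using hxb), Finset.card_singleton]
  exact (Finset.eq_of_subset_of_card_le hsub (by omega)).symm

lemma symmDiff_core {α : Type*} [DecidableEq α] {A B : Finset α}
    (hA : A.card = 2) (hB : B.card = 2) (hAB : A ≠ B) {a b : α} (hab : a ≠ b)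
    (hsd : symmDiff A B = {a, b}) :
    ∃ x, x ≠ a ∧ x ≠ b ∧ ((A = {x, a} ∧ B = {x, b}) ∨ (A = {x, b} ∧ B = {x, a})) := by
  have ha : a ∈ symmDiff A B := by rw [hsd]; simp
  have hb : b ∈ symmDiff A B := by rw [hsd]; simp
  rw [Finset.mem_symmDiff] at ha hb
  have hside : ¬ ((a ∈ A ∧ a ∉ B) ∧ (b ∈ A ∧ b ∉ B)) ∧ ¬ ((a ∈ B ∧ a ∉ A) ∧ (b ∈ B ∧ b ∉ A)) := by
    constructor
    · rintro ⟨⟨haA, haB⟩, ⟨hbA, hbB⟩⟩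
      have hBA : B ⊆ A := by
        intro v hv
        by_contra hvA
        have : v ∈ symmDiff A B := Finset.mem_symmDiff.mpr (Or.inr ⟨hv, hvA⟩)
        rw [hsd] at this
        simp only [Finset.mem_insert, Finset.mem_singleton] at this
        rcases this with rfl | rfl <;> [exact haB hv; exact hbB hv]
      exact hAB (Finset.eq_of_subset_of_card_le hBA (by omega)).symm
    · rintro ⟨⟨haB, haA⟩, ⟨hbB, hbA⟩⟩
      have hABs : A ⊆ B := by
        intro v hv
        by_contra hvB
        have : v ∈ symmDiff A B := Finset.mem_symmDiff.mpr (Or.inl ⟨hv, hvB⟩)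
        rw [hsd] at this
        simp only [Finset.mem_insert, Finset.mem_singleton] at this
        rcases this with rfl | rfl <;> [exact haA hv; exact hbA hv]
      exact hAB (Finset.eq_of_subset_of_card_le hABs (by omega))
  -- now a and b are on opposite sides
  rcases ha with ⟨haA, haB⟩ | ⟨haB, haA⟩ <;> rcases hb with ⟨hbA, hbB⟩ | ⟨hbB, hbA⟩
  · exact absurd ⟨⟨haA, haB⟩, ⟨hbA, hbB⟩⟩ hside.1
  · -- a ∈ A \ B, b ∈ B \ A
    obtain ⟨u, v, huv, hAuv⟩ := Finset.card_eq_two.mp hA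
    have haUV : a = u ∨ a = v := by
      have := haA; rw [hAuv] at this; simpa using this
    set x := if a = u then v else u with hxdef
    have hxA : x ∈ A := by rw [hAuv]; by_cases h : a = u <;> simp [hxdef, h]
    have hxa : x ≠ a := by
      rcases haUV with rfl | rfl
      · simp only [hxdef, if_pos rfl]; exact fun h => huv h.symm
      · rw [hxdef, if_neg (fun h => huv h.symm)]; exact huv
    have hAx : A = {x, a} := by
      apply eq_pair_of_mem hA hxA haA hxa
    have hxb : x ≠ b := fun h => hbA (h ▸ hxA)
    have hxB : x ∈ B := by
      by_contra hxB
      have : x ∈ symmDiff A B := Finset.mem_symmDiff.mpr (Or.inl ⟨hxA, hxB⟩)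
      rw [hsd] at this
      simp only [Finset.mem_insert, Finset.mem_singleton] at this
      tauto
    exact ⟨x, hxa, hxb, Or.inl ⟨hAx, eq_pair_of_mem hB hxB hbB hxb⟩⟩
  · -- b ∈ A \ B, a ∈ B \ A : symmetric
    obtain ⟨u, v, huv, hAuv⟩ := Finset.card_eq_two.mp hA
    have hbUV : b = u ∨ b = v := by
      have := hbA; rw [hAuv] at this; simpa using this
    set x := if b = u then v else u with hxdef
    have hxA : x ∈ A := by rw [hAuv]; by_cases h : b = u <;> simp [hxdef, h]
    have hxb : x ≠ b := by
      rcases hbUV with rfl | rfl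
      · simp only [hxdef, if_pos rfl]; exact fun h => huv h.symm
      · rw [hxdef, if_neg (fun h => huv h.symm)]; exact huv
    have hAx : A = {x, b} := eq_pair_of_mem hA hxA hbA hxb
    have hxa : x ≠ a := fun h => haA (h ▸ hxA)
    have hxB : x ∈ B := by
      by_contra hxB
      have : x ∈ symmDiff A B := Finset.mem_symmDiff.mpr (Or.inl ⟨hxA, hxB⟩)
      rw [hsd] at this
      simp only [Finset.mem_insert, Finset.mem_singleton] at this
      tauto
    exact ⟨x, hxa, hxb, Or.inr ⟨hAx, eq_pair_of_mem hB hxB haB hxa⟩⟩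
  · exact absurd ⟨⟨haB, haA⟩, ⟨hbB, hbA⟩⟩ hside.2

lemma dvg_adj {V : Type*} [DecidableEq V] (G : SimpleGraph V)
    (A B : {A : Finset V // A.card = 2}) :
    (doubleVertexGraph G).Adj A B ↔
      ∃ x a b, x ≠ a ∧ x ≠ b ∧ G.Adj a b ∧ A.1 = {x, a} ∧ B.1 = {x, b} := by
  rw [doubleVertexGraph, tokenGraph, SimpleGraph.fromRel_adj]
  constructor
  · rintro ⟨hne, h | h⟩
    · obtain ⟨a, b, hab, hsd⟩ := h
      have hABne : A.1 ≠ B.1 := fun h => hne (Subtype.ext h)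
      obtain ⟨x, hxa, hxb, ⟨h1, h2⟩ | ⟨h1, h2⟩⟩ := symmDiff_core A.2 B.2 hABne hab.ne hsd
      · exact ⟨x, a, b, hxa, hxb, hab, h1, h2⟩
      · exact ⟨x, b, a, hxb, hxa, hab.symm, h1, h2⟩
    · obtain ⟨a, b, hab, hsd⟩ := h
      rw [symmDiff_comm] at hsd
      have hABne : A.1 ≠ B.1 := fun h => hne (Subtype.ext h)
      obtain ⟨x, hxa, hxb, ⟨h1, h2⟩ | ⟨h1, h2⟩⟩ := symmDiff_core A.2 B.2 hABne hab.ne hsd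
      · exact ⟨x, a, b, hxa, hxb, hab, h1, h2⟩
      · exact ⟨x, b, a, hxb, hxa, hab.symm, h1, h2⟩
  · rintro ⟨x, a, b, hxa, hxb, hab, hA, hB⟩
    refine ⟨?_, Or.inl ⟨a, b, hab, by rw [hA, hB]; exact symmDiff_pair' hxa hxb hab.ne⟩⟩
    intro h
    have hABeq : A.1 = B.1 := congrArg Subtype.val h
    rw [hA, hB, pair_eq_pair'] at hABeq
    rcases hABeq with ⟨_, h2⟩ | ⟨h1, _⟩
    · exact hab.ne h2
    · exact hxb h1

lemma fan_adj_inl_inl {m : ℕ} (i j : Fin m) :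
    (fanG m).Adj (Sum.inl i) (Sum.inl j) ↔ ((i:ℕ)+1 = j ∨ (j:ℕ)+1 = i) := by
  simp only [fanG, joinK1, pathG, SimpleGraph.fromRel_adj, ne_eq, Sum.inl.injEq,
    Sum.isLeft_inl, Sum.isRight_inl, Fin.ext_iff]
  constructor
  · rintro ⟨hne, h⟩
    rcases h with (⟨x, y, ⟨_, h⟩, hi, hj⟩ | _ )| (⟨x, y, ⟨_, h⟩, hj, hi⟩ | _) <;>
      first | omega | simp_all
  · intro h
    exact ⟨by omega, Or.inl (Or.inl ⟨i, j, ⟨by omega, h⟩, rfl, rfl⟩)⟩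

lemma fan_adj_inl_inr {m : ℕ} (i : Fin m) (u : Unit) :
    (fanG m).Adj (Sum.inl i) (Sum.inr u) := by
  rw [fanG, joinK1, SimpleGraph.fromRel_adj]
  exact ⟨by simp, Or.inl (Or.inr (by simp))⟩

lemma fan_adj_inr_inl {m : ℕ} (i : Fin m) (u : Unit) :
    (fanG m).Adj (Sum.inr u) (Sum.inl i) := (fan_adj_inl_inr i u).symm

lemma fan_adj_inr_inr {m : ℕ} (u v : Unit) :
    ¬ (fanG m).Adj (Sum.inr u) (Sum.inr v) := by
  rw [fanG, joinK1, SimpleGraph.fromRel_adj]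
  rintro ⟨hne, h⟩
  simp at h

def emb (m : ℕ) : (Fin m ⊕ Unit) ↪ (Fin (m+1) ⊕ Unit) :=
  Function.Embedding.sumMap Fin.castSuccEmb (Function.Embedding.refl _)

lemma fan_adj_emb {m : ℕ} (a b : Fin m ⊕ Unit) :
    (fanG (m+1)).Adj (emb m a) (emb m b) ↔ (fanG m).Adj a b := by
  cases a with
  | inl i => cases b with
    | inl j =>
        simp only [emb, Function.Embedding.coe_sumMap, Sum.map_inl]
        rw [fan_adj_inl_inl, fan_adj_inl_inl]
        simp
    | inr u =>
        simp only [emb, Function.Embedding.coe_sumMap, Sum.map_inl, Sum.map_inr]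
        simp [fan_adj_inl_inr]
  | inr u => cases b with
    | inl j =>
        simp only [emb, Function.Embedding.coe_sumMap, Sum.map_inl, Sum.map_inr]
        simp [fan_adj_inr_inl]
    | inr v =>
        simp only [emb, Function.Embedding.coe_sumMap, Sum.map_inr]
        simp [fan_adj_inr_inr]


abbrev VV (m : ℕ) := {A : Finset (Fin m ⊕ Unit) // A.card = 2}

def FF {m : ℕ} (A : VV m) : VV (m+1) :=
  ⟨A.1.map (emb m), by rw [Finset.card_map]; exact A.2⟩

lemma FF_adj {m : ℕ} (A B : VV m) :
    (doubleVertexGraph (fanG (m+1))).Adj (FF A) (FF B) ↔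
    (doubleVertexGraph (fanG m)).Adj A B := by
  rw [dvg_adj, dvg_adj]
  constructor
  · rintro ⟨x, a, b, hxa, hxb, hadj, hA, hB⟩
    have hxmem : x ∈ A.1.map (emb m) := by
      show x ∈ (FF A).1; rw [hA]; simp
    have hamem : a ∈ A.1.map (emb m) := by
      show a ∈ (FF A).1; rw [hA]; simp
    have hbmem : b ∈ B.1.map (emb m) := by
      show b ∈ (FF B).1; rw [hB]; simp
    obtain ⟨x₀, hx₀, rfl⟩ := Finset.mem_map.mp hxmem
    obtain ⟨a₀, ha₀, rfl⟩ := Finset.mem_map.mp hamem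
    obtain ⟨b₀, hb₀, rfl⟩ := Finset.mem_map.mp hbmem
    refine ⟨x₀, a₀, b₀, fun h => hxa (by rw [h]), fun h => hxb (by rw [h]),
      (fan_adj_emb a₀ b₀).mp hadj, ?_, ?_⟩
    · apply Finset.map_injective (emb m)
      rw [show (({x₀, a₀} : Finset _).map (emb m)) = {emb m x₀, emb m a₀} by
        simp [Finset.map_insert]]
      exact hA
    · apply Finset.map_injective (emb m)
      rw [show (({x₀, b₀} : Finset _).map (emb m)) = {emb m x₀, emb m b₀} by
        simp [Finset.map_insert]]
      exact hB
  · rintro ⟨x, a, b, hxa, hxb, hadj, hA, hB⟩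
    refine ⟨emb m x, emb m a, emb m b,
      fun h => hxa ((emb m).injective h), fun h => hxb ((emb m).injective h),
      (fan_adj_emb a b).mpr hadj, ?_, ?_⟩
    · show A.1.map (emb m) = _
      rw [hA]; simp [Finset.map_insert]
    · show B.1.map (emb m) = _
      rw [hB]; simp [Finset.map_insert]

def down (m : ℕ) : Fin (m+1) ⊕ Unit → Fin m ⊕ Unit
  | Sum.inl i => if h : (i:ℕ) < m then Sum.inl ⟨i, h⟩ else Sum.inr ()
  | Sum.inr _ => Sum.inr ()

lemma emb_down {m : ℕ} {v : Fin (m+1) ⊕ Unit} (hv : v ≠ Sum.inl (Fin.last m)) :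
    emb m (down m v) = v := by
  cases v with
  | inl i =>
      have hi : (i:ℕ) < m := by
        have : i ≠ Fin.last m := fun h => hv (by rw [h])
        have := Fin.val_lt_last this
        simpa using this
      simp only [down, dif_pos hi, emb, Function.Embedding.coe_sumMap, Sum.map_inl]
      congr 1
  | inr u => rfl

lemma image_down_map {m : ℕ} (A : VV (m+1)) (h : Sum.inl (Fin.last m) ∉ A.1) :
    (A.1.image (down m)).map (emb m) = A.1 := by
  rw [Finset.map_eq_image, Finset.image_image]
  rw [Finset.image_congr (g := id), Finset.image_id]
  intro v hv
  exact emb_down (fun hveq => h (hveq ▸ hv))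

lemma card_image_down {m : ℕ} (A : VV (m+1)) (h : Sum.inl (Fin.last m) ∉ A.1) :
    (A.1.image (down m)).card = 2 := by
  have h1 := image_down_map A h
  have h2 : ((A.1.image (down m)).map (emb m)).card = (A.1.image (down m)).card :=
    Finset.card_map _
  have h3 : (A.1.image (down m)).card ≤ A.1.card := Finset.card_image_le
  have h4 := A.2
  rw [h1] at h2
  omega

noncomputable def pull {m : ℕ} (hm : 1 ≤ m) (A : VV (m+1)) : VV m :=
  if h : Sum.inl (Fin.last m) ∉ A.1 then ⟨A.1.image (down m), card_image_down A h⟩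
  else ⟨{Sum.inl ⟨0, hm⟩, Sum.inr ()}, by simp⟩

lemma FF_pull {m : ℕ} (hm : 1 ≤ m) (A : VV (m+1)) (h : Sum.inl (Fin.last m) ∉ A.1) :
    FF (pull hm A) = A := by
  apply Subtype.ext
  show (pull hm A).1.map (emb m) = A.1
  rw [pull, dif_pos h]
  exact image_down_map A h

lemma s1_bound {m : ℕ} (hm : 1 ≤ m) (K : ℕ) (s₁ : Finset (VV (m+1)))
    (h₁ : ∀ A ∈ s₁, Sum.inl (Fin.last m) ∉ A.1)
    (hind : ∀ a ∈ s₁, ∀ b ∈ s₁, ¬ (doubleVertexGraph (fanG (m+1))).Adj a b)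
    (hK : ∀ t : Finset (VV m),
      (∀ a ∈ t, ∀ b ∈ t, ¬ (doubleVertexGraph (fanG m)).Adj a b) → t.card ≤ K) :
    s₁.card ≤ K := by
  classical
  have hinj : Set.InjOn (pull hm) s₁ := by
    intro A hA B hB hEq
    have : FF (pull hm A) = FF (pull hm B) := by rw [hEq]
    rwa [FF_pull hm A (h₁ A hA), FF_pull hm B (h₁ B hB)] at this
  have hcard : (s₁.image (pull hm)).card = s₁.card := Finset.card_image_of_injOn hinj
  rw [← hcard]
  apply hK
  intro a ha b hb hadj
  obtain ⟨A, hA, rfl⟩ := Finset.mem_image.mp ha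
  obtain ⟨B, hB, rfl⟩ := Finset.mem_image.mp hb
  have : (doubleVertexGraph (fanG (m+1))).Adj (FF (pull hm A)) (FF (pull hm B)) :=
    (FF_adj _ _).mpr hadj
  rw [FF_pull hm A (h₁ A hA), FF_pull hm B (h₁ B hB)] at this
  exact hind A hA B hB this

lemma other_elt {α : Type*} [DecidableEq α] {B : Finset α} (hB : B.card = 2) {x : α}
    (hx : x ∈ B) : ∃ w, w ≠ x ∧ B = {x, w} := by
  obtain ⟨u, v, huv, rfl⟩ := Finset.card_eq_two.mp hB
  simp only [Finset.mem_insert, Finset.mem_singleton] at hx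
  rcases hx with rfl | rfl
  · exact ⟨v, fun h => huv h.symm, rfl⟩
  · exact ⟨u, huv, Finset.pair_comm u x⟩

lemma last_ne_inl {m : ℕ} {j : Fin (m+1)} (h : (j:ℕ) < m) :
    (Sum.inl (Fin.last m) : Fin (m+1) ⊕ Unit) ≠ Sum.inl j := by
  simp only [ne_eq, Sum.inl.injEq, Fin.ext_iff, Fin.val_last]
  omega

lemma s2_bound {m : ℕ} (hm : 1 ≤ m) (s₂ : Finset (VV (m+1)))
    (h₂ : ∀ A ∈ s₂, Sum.inl (Fin.last m) ∈ A.1)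
    (hind : ∀ a ∈ s₂, ∀ b ∈ s₂, ¬ (doubleVertexGraph (fanG (m+1))).Adj a b) :
    s₂.card ≤ (m+1)/2 := by
  classical
  by_cases hcase : ∃ A ∈ s₂, Sum.inr () ∈ A.1
  · obtain ⟨A, hAs, hAr⟩ := hcase
    obtain ⟨wA, hwA, hA⟩ := other_elt A.2 (h₂ A hAs)
    have hwAr : wA = Sum.inr () := by
      rw [hA] at hAr
      simp only [Finset.mem_insert, Finset.mem_singleton] at hAr
      rcases hAr with h | h
      · exact absurd h.symm (by simp)
      · exact h.symm
    subst hwAr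
    have hsub : s₂ ⊆ {A} := by
      intro B hB
      simp only [Finset.mem_singleton]
      by_contra hne
      obtain ⟨w, hw, hBw⟩ := other_elt B.2 (h₂ B hB)
      cases w with
      | inl j =>
          have hjm : (j:ℕ) < m := by
            have : j ≠ Fin.last m := fun h => hw (by rw [h])
            have := Fin.val_lt_last this
            simpa using this
          have hadj : (doubleVertexGraph (fanG (m+1))).Adj A B := by
            rw [dvg_adj]
            exact ⟨Sum.inl (Fin.last m), Sum.inr (), Sum.inl j,
              by simp, last_ne_inl hjm, fan_adj_inr_inl j (), hA, hBw⟩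
          exact hind A hAs B hB hadj
      | inr u =>
          apply hne
          apply Subtype.ext
          rw [hBw, hA]
    calc s₂.card ≤ 1 := by
          have := Finset.card_le_card hsub
          simpa using this
      _ ≤ (m+1)/2 := by omega
  · push_neg at hcase
    have hrep : ∀ A ∈ s₂, ∃ j : Fin (m+1), (j:ℕ) < m ∧
        A.1 = {Sum.inl (Fin.last m), Sum.inl j} := by
      intro A hA
      obtain ⟨w, hw, hAw⟩ := other_elt A.2 (h₂ A hA)
      cases w with
      | inl j =>
          refine ⟨j, ?_, hAw⟩
          have : j ≠ Fin.last m := fun h => hw (by rw [h])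
          have := Fin.val_lt_last this
          simpa using this
      | inr u =>
          exact absurd (hAw ▸ (by simp : Sum.inr () ∈ ({Sum.inl (Fin.last m), Sum.inr u} :
            Finset (Fin (m+1) ⊕ Unit)))) (hcase A hA)
    set f : VV (m+1) → ℕ := fun A =>
      if h : ∃ j : Fin (m+1), (j:ℕ) < m ∧ A.1 = {Sum.inl (Fin.last m), Sum.inl j}
      then ((h.choose : Fin (m+1)) : ℕ)/2 else 0 with hf
    have hb : s₂.card ≤ (Finset.range ((m+1)/2)).card := by
      apply Finset.card_le_card_of_injOn f
      · intro A hA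
        have hex := hrep A hA
        simp only [hf, dif_pos hex, Finset.mem_coe, Finset.mem_range]
        have := hex.choose_spec.1
        omega
      · intro A hA B hB hEq
        have hexA := hrep A hA
        have hexB := hrep B hB
        simp only [hf, dif_pos hexA, dif_pos hexB] at hEq
        obtain ⟨hjA, hAeq⟩ := hexA.choose_spec
        obtain ⟨hjB, hBeq⟩ := hexB.choose_spec
        set jA := hexA.choose
        set jB := hexB.choose
        by_contra hne
        have hABne : jA ≠ jB := by
          intro h
          exact hne (Subtype.ext (by rw [hAeq, hBeq, h]))
        have hvalne : (jA:ℕ) ≠ (jB:ℕ) := fun h => hABne (Fin.ext h)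
        have hcons : ((jA:ℕ)+1 = jB ∨ (jB:ℕ)+1 = jA) := by omega
        have hadj : (doubleVertexGraph (fanG (m+1))).Adj A B := by
          rw [dvg_adj]
          exact ⟨Sum.inl (Fin.last m), Sum.inl jA, Sum.inl jB,
            last_ne_inl hjA, last_ne_inl hjB, (fan_adj_inl_inl jA jB).mpr hcons, hAeq, hBeq⟩
        exact hind A hA B hB hadj
    simpa using hb

instance {m : ℕ} : DecidableRel (fanG m).Adj := fun a b => by
  unfold fanG joinK1 pathG SimpleGraph.fromRel
  exact inferInstanceAs (Decidable (_ ∧ _))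

instance {m : ℕ} : DecidableRel (doubleVertexGraph (fanG m)).Adj := fun a b => by
  unfold doubleVertexGraph tokenGraph SimpleGraph.fromRel
  exact inferInstanceAs (Decidable (_ ∧ _))

lemma base2 : ∀ A B : VV 2, A ≠ B → (doubleVertexGraph (fanG 2)).Adj A B := by decide

lemma upper_bound (m : ℕ) (hm : 2 ≤ m) (s : Finset (VV m))
    (hind : ∀ a ∈ s, ∀ b ∈ s, ¬ (doubleVertexGraph (fanG m)).Adj a b) :
    s.card ≤ m^2/4 := by
  induction m, hm using Nat.le_induction with
  | base =>
      have : s.card ≤ 1 := Finset.card_le_one.mpr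
        (fun a ha b hb => by
          by_contra hne
          exact hind a ha b hb (base2 a b hne))
      calc s.card ≤ 1 := this
        _ = 2^2/4 := by norm_num
  | succ m hm IH =>
      classical
      set p : VV (m+1) → Prop := fun A => Sum.inl (Fin.last m) ∈ A.1 with hp
      set s₂ := s.filter p with hs2def
      set s₁ := s.filter (fun A => ¬ p A) with hs1def
      have hsplit : s.card ≤ s₁.card + s₂.card := by
        have hsub : s ⊆ s₁ ∪ s₂ := by
          intro A hA
          rw [Finset.mem_union, hs1def, hs2def, Finset.mem_filter, Finset.mem_filter]
          by_cases h : p A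
          · exact Or.inr ⟨hA, h⟩
          · exact Or.inl ⟨hA, h⟩
        calc s.card ≤ (s₁ ∪ s₂).card := Finset.card_le_card hsub
          _ ≤ s₁.card + s₂.card := Finset.card_union_le _ _
      have hs₁ : s₁.card ≤ m^2/4 := by
        apply s1_bound (by omega) (m^2/4) s₁
        · intro A hA
          exact (Finset.mem_filter.mp hA).2
        · intro a ha b hb
          exact hind a (Finset.mem_filter.mp ha).1 b (Finset.mem_filter.mp hb).1
        · intro t hti
          exact IH t hti
      have hs₂ : s₂.card ≤ (m+1)/2 := by
        apply s2_bound (by omega) s₂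
        · intro A hA
          exact (Finset.mem_filter.mp hA).2
        · intro a ha b hb
          exact hind a (Finset.mem_filter.mp ha).1 b (Finset.mem_filter.mp hb).1
      have key : (m+1)^2/4 = m^2/4 + (m+1)/2 := by
        obtain ⟨t, ht⟩ : ∃ t, m = 2*t ∨ m = 2*t+1 := ⟨m/2, by omega⟩
        rcases ht with rfl | rfl
        · have h1 : (2*t+1)^2 = 4*(t*t) + (4*t+1) := by ring
          have h2 : (2*t)^2 = 4*(t*t) := by ring
          rw [h1, h2]
          generalize t*t = k
          omega
        · have h1 : (2*t+1+1)^2 = 4*(t*t) + (8*t+4) := by ring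
          have h2 : (2*t+1)^2 = 4*(t*t) + (4*t+1) := by ring
          rw [h1, h2]
          generalize t*t = k
          omega
      omega

lemma card_range_filter_even (n : ℕ) :
    ((Finset.range n).filter (fun x => x % 2 = 0)).card = (n+1)/2 := by
  induction n with
  | zero => simp
  | succ n ih =>
      rw [Finset.range_add_one, Finset.filter_insert]
      split <;> simp [Finset.card_insert_of_notMem, ih] <;> omega

lemma card_range_filter_odd (n : ℕ) :
    ((Finset.range n).filter (fun x => x % 2 = 1)).card = n/2 := by
  induction n with
  | zero => simp
  | succ n ih =>
      rw [Finset.range_add_one, Finset.filter_insert]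
      split <;> simp [Finset.card_insert_of_notMem, ih] <;> omega

lemma card_fin_filter {m : ℕ} (p : ℕ → Prop) [DecidablePred p] :
    (Finset.univ.filter (fun i : Fin m => p i.1)).card
      = ((Finset.range m).filter p).card := by
  apply Finset.card_bij (fun i _ => i.1)
  · intro a ha
    simp only [Finset.mem_filter, Finset.mem_range]
    exact ⟨a.2, (Finset.mem_filter.mp ha).2⟩
  · intro a _ b _ h
    exact Fin.ext h
  · intro b hb
    simp only [Finset.mem_filter, Finset.mem_range] at hb
    exact ⟨⟨b, hb.1⟩, by simp [hb.2], rfl⟩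

def lowT (m : ℕ) : Finset (Fin m × Fin m) :=
  (Finset.univ.filter (fun a : Fin m => (a:ℕ) % 2 = 0)) ×ˢ
    (Finset.univ.filter (fun b : Fin m => (b:ℕ) % 2 = 1))

lemma card_lowT (m : ℕ) : (lowT m).card = m^2/4 := by
  rw [lowT, Finset.card_product, card_fin_filter (fun x => x % 2 = 0),
    card_fin_filter (fun x => x % 2 = 1), card_range_filter_even, card_range_filter_odd]
  obtain ⟨t, ht⟩ : ∃ t, m = 2*t ∨ m = 2*t+1 := ⟨m/2, by omega⟩
  rcases ht with rfl | rfl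
  · have h2 : (2*t)^2 = 4*(t*t) := by ring
    rw [h2]
    have h3 : (2*t+1)/2 = t := by omega
    have h4 : 2*t/2 = t := by omega
    rw [h3, h4]
    generalize t*t = k at *
    omega
  · have h2 : (2*t+1)^2 = 4*(t*t) + (4*t+1) := by ring
    rw [h2]
    have h3 : (2*t+1+1)/2 = t+1 := by omega
    have h4 : (2*t+1)/2 = t := by omega
    rw [h3, h4]
    have h5 : (t+1)*t = t*t+t := by ring
    rw [h5]
    generalize t*t = k at *
    omega

def lowF {m : ℕ} (p : Fin m × Fin m) : VV m :=
  if h : ({Sum.inl p.1, Sum.inl p.2} : Finset (Fin m ⊕ Unit)).card = 2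
  then ⟨{Sum.inl p.1, Sum.inl p.2}, h⟩
  else ⟨{Sum.inl p.1, Sum.inr ()}, by simp⟩

lemma lowF_eq {m : ℕ} {p : Fin m × Fin m} (hp : p ∈ lowT m) :
    (lowF p).1 = {Sum.inl p.1, Sum.inl p.2} := by
  have hne : p.1 ≠ p.2 := by
    rw [lowT, Finset.mem_product, Finset.mem_filter, Finset.mem_filter] at hp
    intro h
    rw [h] at hp
    omega
  have h : ({Sum.inl p.1, Sum.inl p.2} : Finset (Fin m ⊕ Unit)).card = 2 := by
    rw [Finset.card_insert_of_notMem (by simpa using hne), Finset.card_singleton]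
  rw [lowF, dif_pos h]

lemma lowT_parity {m : ℕ} {p : Fin m × Fin m} (hp : p ∈ lowT m) :
    (p.1:ℕ) % 2 = 0 ∧ (p.2:ℕ) % 2 = 1 := by
  rw [lowT, Finset.mem_product, Finset.mem_filter, Finset.mem_filter] at hp
  exact ⟨hp.1.2, hp.2.2⟩

lemma low_indep (m : ℕ) :
    ∀ a ∈ (lowT m).image lowF, ∀ b ∈ (lowT m).image lowF,
      ¬ (doubleVertexGraph (fanG m)).Adj a b := by
  intro A hA B hB hadj
  obtain ⟨p, hp, rfl⟩ := Finset.mem_image.mp hA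
  obtain ⟨q, hq, rfl⟩ := Finset.mem_image.mp hB
  obtain ⟨hp1, hp2⟩ := lowT_parity hp
  obtain ⟨hq1, hq2⟩ := lowT_parity hq
  rw [dvg_adj] at hadj
  obtain ⟨x, a, b, hxa, hxb, hadj', hAeq, hBeq⟩ := hadj
  rw [lowF_eq hp] at hAeq
  rw [lowF_eq hq] at hBeq
  rw [pair_eq_pair'] at hAeq hBeq
  -- in all cases, x a b are inl of p/q components
  rcases hAeq with ⟨hA1, hA2⟩ | ⟨hA1, hA2⟩ <;> rcases hBeq with ⟨hB1, hB2⟩ | ⟨hB1, hB2⟩ <;>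
    subst_vars <;>
  · first
    | (rw [fan_adj_inl_inl] at hadj'; omega)
    | (simp only [Sum.inl.injEq] at *; omega)

lemma low_card (m : ℕ) : ((lowT m).image lowF).card = m^2/4 := by
  rw [Finset.card_image_of_injOn, card_lowT]
  intro p hp q hq h
  obtain ⟨hp1, hp2⟩ := lowT_parity hp
  obtain ⟨hq1, hq2⟩ := lowT_parity hq
  have h' : (lowF p).1 = (lowF q).1 := by rw [h]
  rw [lowF_eq hp, lowF_eq hq, pair_eq_pair'] at h'
  rcases h' with ⟨h1, h2⟩ | ⟨h1, h2⟩
  · simp only [Sum.inl.injEq] at h1 h2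
    exact Prod.ext h1 h2
  · simp only [Sum.inl.injEq] at h1 h2
    rw [h1] at hp1
    omega


/-- For every integer `m ≥ 2`, the independence number of the double vertex graph of
the fan graph `F_{m,1}` equals `⌊m²/4⌋`. -/
theorem indepNum_doubleVertexGraph_fan (m : ℕ) (hm : 2 ≤ m) :
    indepNum (doubleVertexGraph (fanG m)) = m ^ 2 / 4 := by
  have hub : ∀ n ∈ {n | ∃ s : Finset (VV m), s.card = n ∧
      ∀ a ∈ s, ∀ b ∈ s, ¬ (doubleVertexGraph (fanG m)).Adj a b}, n ≤ m^2/4 := by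
    rintro n ⟨s, rfl, hind⟩
    exact upper_bound m hm s hind
  apply le_antisymm
  · exact csSup_le ⟨0, ∅, by simp⟩ hub
  · exact le_csSup ⟨m^2/4, hub⟩ ⟨(lowT m).image lowF, low_card m, low_indep m⟩
end

section
/- For every integer m ≥ 4, the independence number of the double vertex graph of the wheel graph W_{m,1} equals ⌊(m/2)·⌊m/2⌋⌋. -/
open Sum Finset


/-- concrete cycle adjacency on ℕ values -/
def cyc (m a b : ℕ) : Prop :=
  a + 1 = b ∨ b + 1 = a ∨ (a = 0 ∧ b = m - 1) ∨ (b = 0 ∧ a = m - 1)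

lemma cyc_symm {m a b : ℕ} (h : cyc m a b) : cyc m b a := by unfold cyc at *; tauto

lemma cycleG_adj_iff {m : ℕ} (i j : Fin m) :
    (cycleG m).Adj i j ↔ i ≠ j ∧ cyc m i.val j.val := by
  simp only [cycleG, SimpleGraph.fromRel_adj, cyc]; tauto

lemma wheel_adj_inl_inl {m : ℕ} (i j : Fin m) :
    (wheelG m).Adj (inl i) (inl j) ↔ i ≠ j ∧ cyc m i.val j.val := by
  constructor
  · rintro ⟨hne, h | h⟩
    · rcases h with ⟨x, y, hxy, hx, hy⟩ | ⟨h1, h2⟩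
      · obtain ⟨rfl⟩ := inl.inj_iff.1 hx; obtain ⟨rfl⟩ := inl.inj_iff.1 hy
        exact (cycleG_adj_iff i j).1 hxy
      · simp at h2
    · rcases h with ⟨x, y, hxy, hx, hy⟩ | ⟨h1, h2⟩
      · obtain ⟨rfl⟩ := inl.inj_iff.1 hx; obtain ⟨rfl⟩ := inl.inj_iff.1 hy
        have := (cycleG_adj_iff j i).1 hxy
        exact ⟨fun h => this.1 h.symm, cyc_symm this.2⟩
      · simp at h2
  · rintro ⟨hne, h⟩
    refine ⟨by simpa using hne, Or.inl (Or.inl ⟨i, j, (cycleG_adj_iff i j).2 ⟨hne, h⟩, rfl, rfl⟩)⟩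

lemma wheel_adj_inl_inr {m : ℕ} (i : Fin m) : (wheelG m).Adj (inl i) (inr ()) := by
  exact ⟨by simp, Or.inl (Or.inr (by simp))⟩

lemma wheel_adj_inr_inl {m : ℕ} (i : Fin m) : (wheelG m).Adj (inr ()) (inl i) :=
  (wheel_adj_inl_inr i).symm

lemma wheel_not_adj_inr_inr {m : ℕ} : ¬ (wheelG m).Adj (inr () : Fin m ⊕ Unit) (inr ()) :=
  fun h => h.ne rfl


open Sum Finset
namespace WheelPf

section SD
variable {α : Type*} [DecidableEq α]

lemma sd_same_left {p q s : α} (hqp : q ≠ p) (hsp : s ≠ p) (hqs : q ≠ s) :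
    symmDiff ({p,q} : Finset α) {p,s} = {q,s} := by
  ext x
  simp only [Finset.mem_symmDiff, mem_insert, mem_singleton]
  by_cases h1 : x = p <;> by_cases h2 : x = q <;> by_cases h3 : x = s <;> simp_all

lemma pair_eq_cases {a b c d : α} (h : ({a,b} : Finset α) = {c,d}) :
    (a = c ∧ b = d) ∨ (a = d ∧ b = c) := by
  have hm := Finset.ext_iff.1 h
  simp only [Finset.mem_insert, Finset.mem_singleton] at hm
  have h1 := (hm a).1 (by left; rfl)
  have h2 := (hm b).1 (by right; rfl)
  have h3 := (hm c).2 (by left; rfl)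
  have h4 := (hm d).2 (by right; rfl)
  rcases h1 with h1 | h1 <;> rcases h2 with h2 | h2 <;> subst h1 <;> subst h2 <;> tauto

lemma mem_sd_left {s t : Finset α} {x : α} (hx : x ∈ s) (hx' : x ∉ t) : x ∈ symmDiff s t := by
  rw [Finset.mem_symmDiff]; tauto

end SD

lemma pair_ne_iff {α : Type*} [DecidableEq α] {p q r s : α} (hpq : p ≠ q) (hq : q ≠ r) (hq2 : q ≠ s) :
    ({p, q} : Finset α) ≠ {r, s} := by
  intro h
  have : q ∈ ({r, s} : Finset α) := h ▸ (by simp)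
  simp only [mem_insert, mem_singleton] at this; tauto


variable {m : ℕ}

abbrev Vtx (m : ℕ) := {A : Finset (Fin m ⊕ Unit) // A.card = 2}
abbrev DV (m : ℕ) := doubleVertexGraph (wheelG m)

lemma dv_adj_iff {A B : Vtx m} :
    (DV m).Adj A B ↔ A ≠ B ∧ ∃ a b, (wheelG m).Adj a b ∧ symmDiff A.1 B.1 = {a, b} := by
  simp only [DV, doubleVertexGraph, tokenGraph, SimpleGraph.fromRel_adj]
  constructor
  · rintro ⟨hne, ⟨a, b, hab, hsd⟩ | ⟨a, b, hab, hsd⟩⟩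
    · exact ⟨hne, a, b, hab, hsd⟩
    · exact ⟨hne, a, b, hab, by rwa [symmDiff_comm]⟩
  · rintro ⟨hne, a, b, hab, hsd⟩
    exact ⟨hne, Or.inl ⟨a, b, hab, hsd⟩⟩

/-- intro rule: two pairs sharing `p`, other elements wheel-adjacent -/
lemma adj_intro {A B : Vtx m} {p q r : Fin m ⊕ Unit}
    (hA : A.1 = {p, q}) (hB : B.1 = {p, r})
    (hqp : q ≠ p) (hrp : r ≠ p) (hqr : q ≠ r)
    (h : (wheelG m).Adj q r) : (DV m).Adj A B := by
  rw [dv_adj_iff]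
  refine ⟨?_, q, r, h, by rw [hA, hB]; exact sd_same_left hqp hrp hqr⟩
  intro hab
  have : A.1 = B.1 := by rw [hab]
  rw [hA, hB] at this
  have : q ∈ ({p, r} : Finset (Fin m ⊕ Unit)) := this ▸ (by simp)
  simp only [mem_insert, mem_singleton] at this; tauto

lemma wheel_adj_of_pair_eq {q s a b : Fin m ⊕ Unit}
    (h : ({q, s} : Finset (Fin m ⊕ Unit)) = {a, b}) (hadj : (wheelG m).Adj a b) :
    (wheelG m).Adj q s := by
  rcases pair_eq_cases h with ⟨rfl, rfl⟩ | ⟨rfl, rfl⟩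
  · exact hadj
  · exact hadj.symm

/-- symmetric difference of two distinct 2-sets equal to a 2-set: case analysis -/
lemma sd_pair_cases {α : Type*} [DecidableEq α] {p q r s a b : α}
    (hpq : p ≠ q) (hrs : r ≠ s) (hABne : ({p,q} : Finset α) ≠ {r,s})
    (hsd : symmDiff ({p,q} : Finset α) {r,s} = {a,b}) :
    (p = r ∧ q ≠ s ∧ ({q,s} : Finset α) = {a,b}) ∨
    (p = s ∧ q ≠ r ∧ ({q,r} : Finset α) = {a,b}) ∨
    (q = r ∧ p ≠ s ∧ ({p,s} : Finset α) = {a,b}) ∨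
    (q = s ∧ p ≠ r ∧ ({p,r} : Finset α) = {a,b}) := by
  by_cases hpr : p = r
  · subst hpr
    by_cases hqs : q = s
    · exact absurd (by rw [hqs]) hABne
    · exact Or.inl ⟨rfl, hqs, by rw [← hsd, sd_same_left (Ne.symm hpq) (Ne.symm hrs) hqs]⟩
  · by_cases hps : p = s
    · subst hps
      by_cases hqr : q = r
      · exact absurd (by rw [hqr, Finset.pair_comm]) hABne
      · refine Or.inr (Or.inl ⟨rfl, hqr, ?_⟩)
        rw [← hsd, Finset.pair_comm r p, sd_same_left (Ne.symm hpq) hrs hqr]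
    · by_cases hqr : q = r
      · subst hqr
        by_cases hqs : q = s
        · exact absurd (hqs ▸ rfl) hrs
        · refine Or.inr (Or.inr (Or.inl ⟨rfl, hps, ?_⟩))
          rw [← hsd, Finset.pair_comm p q, sd_same_left hpq (Ne.symm hrs) hps]
      · by_cases hqs : q = s
        · subst hqs
          refine Or.inr (Or.inr (Or.inr ⟨rfl, hpr, ?_⟩))
          rw [← hsd, Finset.pair_comm p q, Finset.pair_comm r q,
            sd_same_left hpq hrs hpr]
        · exfalso
          have hmem : ∀ x : α, x ∈ symmDiff ({p,q} : Finset α) {r,s} → x = a ∨ x = b := by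
            intro x hx; rw [hsd] at hx; simpa using hx
          have h1 : p = a ∨ p = b := hmem p (mem_sd_left (by simp) (by simp [hpr, hps]))
          have h2 : q = a ∨ q = b := hmem q (mem_sd_left (by simp) (by simp [hqr, hqs]))
          have h3 : r = a ∨ r = b := hmem r (by
            rw [Finset.mem_symmDiff]; right
            refine ⟨by simp, ?_⟩
            simp only [mem_insert, mem_singleton]
            push_neg
            exact ⟨fun hh => hpr hh.symm, fun hh => hqr hh.symm⟩)
          rcases h1 with rfl | rfl <;> rcases h2 with rfl | rfl <;>
            rcases h3 with rfl | rfl <;> simp_all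

/-- elimination: adjacency of explicit pairs -/
lemma adj_elim {A B : Vtx m} {p q r s : Fin m ⊕ Unit}
    (h : (DV m).Adj A B) (hA : A.1 = {p, q}) (hB : B.1 = {r, s})
    (hpq : p ≠ q) (hrs : r ≠ s) :
    (p = r ∧ q ≠ s ∧ (wheelG m).Adj q s) ∨ (p = s ∧ q ≠ r ∧ (wheelG m).Adj q r) ∨
    (q = r ∧ p ≠ s ∧ (wheelG m).Adj p s) ∨ (q = s ∧ p ≠ r ∧ (wheelG m).Adj p r) := by
  rw [dv_adj_iff] at h
  obtain ⟨hne, a, b, hab, hsd⟩ := h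
  rw [hA, hB] at hsd
  have hABne : ({p, q} : Finset (Fin m ⊕ Unit)) ≠ {r, s} := by
    intro hh; exact hne (Subtype.ext (hA.trans (hh.trans hB.symm)))
  rcases sd_pair_cases hpq hrs hABne hsd with ⟨h1, h2, h3⟩ | ⟨h1, h2, h3⟩ | ⟨h1, h2, h3⟩ | ⟨h1, h2, h3⟩
  · exact Or.inl ⟨h1, h2, wheel_adj_of_pair_eq h3 hab⟩
  · exact Or.inr (Or.inl ⟨h1, h2, wheel_adj_of_pair_eq h3 hab⟩)
  · exact Or.inr (Or.inr (Or.inl ⟨h1, h2, wheel_adj_of_pair_eq h3 hab⟩))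
  · exact Or.inr (Or.inr (Or.inr ⟨h1, h2, wheel_adj_of_pair_eq h3 hab⟩))

/-- wrap-around: for `t < 2m` this is `t % m` -/
def wr (m t : ℕ) : ℕ := if t < m then t else t - m

def vc {m : ℕ} : Fin m ⊕ Unit → ℕ := Sum.elim Fin.val (fun _ => m)

lemma vc_inj {m : ℕ} : Function.Injective (vc (m := m)) := by
  rintro (a | a) (b | b) h <;> simp only [vc, Sum.elim_inl, Sum.elim_inr] at h
  · exact congrArg inl (Fin.ext h)
  · exact absurd h (Nat.ne_of_lt a.2)
  · exact absurd h.symm (Nat.ne_of_lt b.2)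
  · rfl

lemma vtx_desc (A : Vtx m) : ∃ u v : Fin m ⊕ Unit, u ≠ v ∧ A.1 = {u, v} := by
  obtain ⟨u, v, huv, h⟩ := Finset.card_eq_two.1 A.2
  exact ⟨u, v, huv, h⟩

lemma vtx_nonempty_img (A : Vtx m) : (A.1.image (vc (m := m))).Nonempty :=
  Finset.Nonempty.image (Finset.card_pos.mp (by rw [A.2]; norm_num)) _

noncomputable def lo (A : Vtx m) : ℕ := (A.1.image vc).min' (vtx_nonempty_img A)
noncomputable def hi (A : Vtx m) : ℕ := (A.1.image vc).max' (vtx_nonempty_img A)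

lemma lohi_spec (A : Vtx m) {u v : Fin m ⊕ Unit} (h : A.1 = {u, v}) :
    lo A = min (vc u) (vc v) ∧ hi A = max (vc u) (vc v) := by
  have himg : A.1.image vc = insert (vc u) {vc v} := by rw [h]; simp
  constructor
  · rw [lo]; simp_rw [himg]
    rw [Finset.min'_insert _ _ (Finset.singleton_nonempty _), Finset.min'_singleton, min_comm]
  · rw [hi]; simp_rw [himg]
    rw [Finset.max'_insert _ _ (Finset.singleton_nonempty _), Finset.max'_singleton, max_comm]

lemma lo_lt_hi (A : Vtx m) : lo A < hi A := by
  obtain ⟨u, v, huv, h⟩ := vtx_desc A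
  obtain ⟨h1, h2⟩ := lohi_spec A h
  have : vc u ≠ vc v := fun hh => huv (vc_inj hh)
  omega

lemma hi_le (A : Vtx m) : hi A ≤ m := by
  obtain ⟨u, v, huv, h⟩ := vtx_desc A
  obtain ⟨-, h2⟩ := lohi_spec A h
  have hu : vc u ≤ m := by rcases u with a | a <;> simp [vc] <;> exact a.2.le
  have hv : vc v ≤ m := by rcases v with a | a <;> simp [vc] <;> exact a.2.le
  omega

/-- hub description -/
lemma hub_desc (A : Vtx m) (h : hi A = m) :
    ∃ i : Fin m, A.1 = {inl i, inr ()} ∧ i.val = lo A := by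
  obtain ⟨u, v, huv, hA⟩ := vtx_desc A
  obtain ⟨h1, h2⟩ := lohi_spec A hA
  rcases u with a | a <;> rcases v with b | b
  · exfalso; simp only [vc, Sum.elim_inl] at h2; have := a.2; have := b.2; omega
  · refine ⟨a, hA, ?_⟩; simp only [vc, Sum.elim_inl, Sum.elim_inr] at h1; have := a.2; omega
  · refine ⟨b, by rw [hA, Finset.pair_comm], ?_⟩
    simp only [vc, Sum.elim_inl, Sum.elim_inr] at h1; have := b.2; omega
  · exact absurd rfl huv

/-- cycle pair description -/
lemma cyc_desc (A : Vtx m) (h : hi A < m) :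
    ∃ i j : Fin m, A.1 = {inl i, inl j} ∧ i.val = lo A ∧ j.val = hi A := by
  obtain ⟨u, v, huv, hA⟩ := vtx_desc A
  obtain ⟨h1, h2⟩ := lohi_spec A hA
  rcases u with a | a <;> rcases v with b | b
  · simp only [vc, Sum.elim_inl] at h1 h2
    rcases le_total a.val b.val with hab | hab
    · exact ⟨a, b, hA, by omega, by omega⟩
    · exact ⟨b, a, by rw [hA, Finset.pair_comm], by omega, by omega⟩
  · exfalso; simp only [vc, Sum.elim_inl, Sum.elim_inr] at h2; omega
  · exfalso; simp only [vc, Sum.elim_inl, Sum.elim_inr] at h2; omega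
  · exact absurd rfl huv

noncomputable def dd (A : Vtx m) : ℕ := min (hi A - lo A) (m - (hi A - lo A))
noncomputable def xa (A : Vtx m) : ℕ :=
  if hi A - lo A ≤ m - (hi A - lo A) then lo A else hi A

lemma dd_pos (A : Vtx m) (h : hi A < m) : 1 ≤ dd A := by
  have := lo_lt_hi A; unfold dd; omega

lemma dd_le (A : Vtx m) (h : hi A < m) : dd A ≤ m / 2 := by
  have := lo_lt_hi A; unfold dd; omega

lemma xa_lt (A : Vtx m) (h : hi A < m) : xa A < m := by
  have := lo_lt_hi A; unfold xa; split <;> omega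

/-- canonical reconstruction of a cycle pair -/
lemma cyc_recon (A : Vtx m) (h : hi A < m) :
    ∃ i j : Fin m, A.1 = {inl i, inl j} ∧ i.val = xa A ∧ j.val = wr m (xa A + dd A) := by
  obtain ⟨i, j, hA, hi', hj'⟩ := cyc_desc A h
  have hlh := lo_lt_hi A
  by_cases hc : hi A - lo A ≤ m - (hi A - lo A)
  · refine ⟨i, j, hA, ?_, ?_⟩
    · rw [xa, if_pos hc]; exact hi'
    · rw [xa, if_pos hc, dd, min_eq_left hc, wr]; split <;> omega
  · refine ⟨j, i, by rw [hA, Finset.pair_comm], ?_, ?_⟩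
    · rw [xa, if_neg hc]; exact hj'
    · rw [xa, if_neg hc, dd, min_eq_right (by omega), wr]; split <;> omega

lemma wr_lt {m t : ℕ} (h : t < 2 * m) (h0 : 0 < m) : wr m t < m := by unfold wr; split <;> omega

/-- two cycle pairs with equal canonical coordinates are equal -/
lemma cyc_eq_of_code {A B : Vtx m} (hA : hi A < m) (hB : hi B < m)
    (hx : xa A = xa B) (hd : dd A = dd B) : A = B := by
  obtain ⟨i, j, hA1, hA2, hA3⟩ := cyc_recon A hA
  obtain ⟨i', j', hB1, hB2, hB3⟩ := cyc_recon B hB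
  have hii : i = i' := Fin.ext (by rw [hA2, hB2, hx])
  have hjj : j = j' := Fin.ext (by rw [hA3, hB3, hx, hd])
  exact Subtype.ext (by rw [hA1, hB1, hii, hjj])

/-- hub pair is adjacent to any cycle pair whose canonical base point equals its rim vertex -/
lemma adj_hub_cyc (hm : 4 ≤ m) {A B : Vtx m} (hA : hi A = m) (hB : hi B < m)
    (h : lo A = xa B) : (DV m).Adj A B := by
  obtain ⟨i, hA1, hA2⟩ := hub_desc A hA
  obtain ⟨i', j', hB1, hB2, hB3⟩ := cyc_recon B hB
  have hii : i = i' := Fin.ext (by rw [hA2, hB2, h])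
  have hd1 := dd_pos B hB
  have hd2 := dd_le B hB
  have hxlt := xa_lt B hB
  have hne : j'.val ≠ i'.val := by rw [hB3, hB2]; unfold wr; split <;> omega
  refine adj_intro (p := inl i') (q := inr ()) (r := inl j')
    (by rw [hA1, hii]) hB1 (by simp) (by simp [Fin.ext_iff, hne]) (by simp)
    (wheel_adj_inr_inl j')

/-- two cycle pairs with same base point and distances differing by one are adjacent -/
lemma adj_same_x (hm : 4 ≤ m) {A B : Vtx m} (hA : hi A < m) (hB : hi B < m)
    (hx : xa A = xa B) (hd : dd B = dd A + 1) : (DV m).Adj A B := by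
  obtain ⟨i, j, hA1, hA2, hA3⟩ := cyc_recon A hA
  obtain ⟨i', j', hB1, hB2, hB3⟩ := cyc_recon B hB
  have hii : i = i' := Fin.ext (by rw [hA2, hB2, hx])
  have hd1 := dd_pos A hA
  have hd2 := dd_le B hB
  have hxlt := xa_lt A hA
  have hji : j.val ≠ i.val := by rw [hA3, hA2]; unfold wr; split <;> omega
  have hj'i : j'.val ≠ i.val := by rw [hB3, hA2, ← hx]; unfold wr; split <;> omega
  have hjj' : j.val ≠ j'.val := by
    rw [hA3, hB3, ← hx]
    unfold wr
    rcases Nat.lt_or_ge (xa A + dd A) m with h1 | h1 <;>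
      rcases Nat.lt_or_ge (xa A + dd B) m with h2 | h2 <;>
      simp only [h1, h2, if_true, if_false, Nat.not_lt.2, if_pos, if_neg] <;> omega
  refine adj_intro (p := inl i) (q := inl j) (r := inl j')
    (by rw [hA1, Finset.pair_comm]) (by rw [hB1, hii, Finset.pair_comm])
    (by simp [Fin.ext_iff, hji]) (by simp [Fin.ext_iff, hj'i]) (by simp [Fin.ext_iff, hjj'])
    ((wheel_adj_inl_inl j j').2 ⟨by simp [Fin.ext_iff, hjj'], by
      rw [hA3, hB3, ← hx, hd]; unfold cyc wr; split <;> split <;> omega⟩)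

noncomputable def code (A : Vtx m) : ℕ × ℕ :=
  if hi A = m then (lo A, 0) else if dd A ≤ 2 then (xa A, 0) else (xa A, (dd A - 1) / 2)

lemma code_hub {A : Vtx m} (h : hi A = m) : code A = (lo A, 0) := by rw [code, if_pos h]

lemma code_fst_cyc {A : Vtx m} (h : hi A < m) : (code A).1 = xa A := by
  rw [code, if_neg (by omega)]; split <;> rfl

lemma code_snd_cyc {A : Vtx m} (h : hi A < m) :
    (code A).2 = if dd A ≤ 2 then 0 else (dd A - 1) / 2 := by
  rw [code, if_neg (by omega)]; split <;> simp_all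

lemma hub_eq_of_lo {A B : Vtx m} (hA : hi A = m) (hB : hi B = m) (h : lo A = lo B) : A = B := by
  obtain ⟨i, hA1, hA2⟩ := hub_desc A hA
  obtain ⟨i', hB1, hB2⟩ := hub_desc B hB
  have : i = i' := Fin.ext (by rw [hA2, hB2, h])
  exact Subtype.ext (by rw [hA1, hB1, this])

lemma code_clique (hm : 4 ≤ m) {A B : Vtx m} (hne : A ≠ B) (hcode : code A = code B) :
    (DV m).Adj A B ∨ (DV m).Adj B A := by
  have hAle := hi_le A
  have hBle := hi_le B
  by_cases hA : hi A = m <;> by_cases hB : hi B = m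
  · exfalso
    rw [code_hub hA, code_hub hB, Prod.mk.injEq] at hcode
    exact hne (hub_eq_of_lo hA hB hcode.1)
  · have hB' : hi B < m := by omega
    refine Or.inl (adj_hub_cyc hm hA hB' ?_)
    have := congrArg Prod.fst hcode
    rwa [code_hub hA, code_fst_cyc hB'] at this
  · have hA' : hi A < m := by omega
    refine Or.inr (adj_hub_cyc hm hB hA' ?_)
    have := congrArg Prod.fst hcode
    rw [code_hub hB, code_fst_cyc hA'] at this
    exact this.symm
  · have hA' : hi A < m := by omega
    have hB' : hi B < m := by omega
    have hx : xa A = xa B := by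
      have := congrArg Prod.fst hcode
      rwa [code_fst_cyc hA', code_fst_cyc hB'] at this
    have hsnd := congrArg Prod.snd hcode
    rw [code_snd_cyc hA', code_snd_cyc hB'] at hsnd
    have hdA1 := dd_pos A hA'
    have hdB1 := dd_pos B hB'
    have hdne : dd A ≠ dd B := by
      intro h; exact hne (cyc_eq_of_code hA' hB' hx h)
    have hdd : dd B = dd A + 1 ∨ dd A = dd B + 1 := by
      split_ifs at hsnd <;> omega
    rcases hdd with h | h
    · exact Or.inl (adj_same_x hm hA' hB' hx h)
    · exact Or.inr (adj_same_x hm hB' hA' hx.symm h)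

/-- the special predicate: cycle pairs at odd maximal distance -/
def PT (m : ℕ) (A : Vtx m) : Prop := hi A < m ∧ dd A = m / 2 ∧ m / 2 % 2 = 1

noncomputable instance : DecidablePred (PT m) := fun _ => Classical.dec _

lemma S0_bound (hm : 4 ≤ m) (S : Finset (Vtx m))
    (hind : ∀ a ∈ S, ∀ b ∈ S, ¬ (DV m).Adj a b) :
    (S.filter (fun A => ¬ PT m A)).card ≤ m * (m / 2 / 2) := by
  refine le_trans (Finset.card_le_card_of_injOn
    (t := Finset.range m ×ˢ Finset.range (m / 2 / 2)) code ?_ ?_)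
    (le_of_eq (by simp [Finset.card_product]))
  · intro A hA
    rw [Finset.mem_coe, Finset.mem_filter] at hA
    obtain ⟨hAS, hAP⟩ := hA
    rw [Finset.mem_coe, Finset.mem_product, Finset.mem_range, Finset.mem_range]
    have hle := hi_le A
    have hlh := lo_lt_hi A
    by_cases hhub : hi A = m
    · rw [code_hub hhub]; constructor <;> simp <;> omega
    · have hA' : hi A < m := by omega
      have h1 := dd_pos A hA'
      have h2 := dd_le A hA'
      have h3 := xa_lt A hA'
      have hnp : ¬ (dd A = m / 2 ∧ m / 2 % 2 = 1) := fun hc => hAP ⟨hA', hc.1, hc.2⟩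
      refine ⟨by rw [code_fst_cyc hA']; exact h3, ?_⟩
      rw [code_snd_cyc hA']
      split <;> omega
  · intro A hA B hB hcode
    by_contra hne
    rcases code_clique hm hne hcode with h | h
    · exact hind A (Finset.mem_of_mem_filter _ hA) B (Finset.mem_of_mem_filter _ hB) h
    · exact hind B (Finset.mem_of_mem_filter _ hB) A (Finset.mem_of_mem_filter _ hA) h

/-- adjacency between two antipodal-class pairs (odd m) -/
lemma adj_T (hm : 4 ≤ m) (hm2 : m % 2 = 1) {A B : Vtx m} (hA : hi A < m) (hB : hi B < m)
    (hdA : dd A = m / 2) (hdB : dd B = m / 2) (hxy : xa B = wr m (xa A + (m / 2 + 1))) :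
    (DV m).Adj A B := by
  obtain ⟨i, j, hA1, hA2, hA3⟩ := cyc_recon A hA
  obtain ⟨i', j', hB1, hB2, hB3⟩ := cyc_recon B hB
  have hxA := xa_lt A hA
  have hxB := xa_lt B hB
  have hj'x : j'.val = i.val := by
    rw [hB3, hxy, hdB, hA2]; unfold wr; split <;> split <;> omega
  have hji : j.val ≠ i.val := by rw [hA3, hA2, hdA]; unfold wr; split <;> omega
  have hi'i : i'.val ≠ i.val := by rw [hB2, hxy, hA2]; unfold wr; split <;> omega
  have hji' : j.val ≠ i'.val := by
    rw [hA3, hB2, hxy, hdA]; unfold wr; split <;> split <;> omega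
  have hj'i : j' = i := Fin.ext hj'x
  refine adj_intro (p := inl i) (q := inl j) (r := inl i')
    (by rw [hA1, Finset.pair_comm]) (by rw [hB1, hj'i, Finset.pair_comm])
    (by simp [Fin.ext_iff, hji]) (by simp [Fin.ext_iff, hi'i]) (by simp [Fin.ext_iff, hji'])
    ((wheel_adj_inl_inl j i').2 ⟨by simp [Fin.ext_iff, hji'], by
      rw [hA3, hB2, hxy, hdA]; unfold cyc wr; split <;> split <;> omega⟩)

lemma T_bound (hm : 4 ≤ m) (S : Finset (Vtx m))
    (hind : ∀ a ∈ S, ∀ b ∈ S, ¬ (DV m).Adj a b) :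
    (S.filter (PT m)).card ≤ if m / 2 % 2 = 1 then m / 2 else 0 := by
  by_cases hD : m / 2 % 2 = 1
  swap
  · rw [if_neg hD, Nat.le_zero, Finset.card_eq_zero, Finset.filter_eq_empty_iff]
    exact fun A hA hPA => hD hPA.2.2
  rw [if_pos hD]
  set T := S.filter (PT m) with hT
  have hTcard : T.card = (T.image xa).card := by
    rw [Finset.card_image_of_injOn]
    intro A hA B hB hxab
    simp only [Finset.mem_coe, hT, Finset.mem_filter] at hA hB
    exact cyc_eq_of_code hA.2.1 hB.2.1 hxab (by rw [hA.2.2.1, hB.2.2.1])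
  by_cases hm2 : m % 2 = 1
  · -- odd m : injection trick on the antipodal cycle
    set X := T.image xa with hX
    have hXsub : X ⊆ Finset.range m := by
      intro x hx
      rw [hX, Finset.mem_image] at hx
      obtain ⟨A, hA, rfl⟩ := hx
      rw [hT, Finset.mem_filter] at hA
      exact Finset.mem_range.2 (xa_lt A hA.2.1)
    have hkey : ∀ x ∈ X, wr m (x + (m / 2 + 1)) ∉ X := by
      intro x hx hx'
      rw [hX, Finset.mem_image] at hx hx'
      obtain ⟨A, hA, rfl⟩ := hx
      obtain ⟨B, hB, hxB⟩ := hx'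
      rw [hT, Finset.mem_filter] at hA hB
      exact hind A hA.1 B hB.1
        (adj_T hm hm2 hA.2.1 hB.2.1 hA.2.2.1 hB.2.2.1 hxB)
    have himg : X.image (fun x => wr m (x + (m / 2 + 1))) ⊆ Finset.range m \ X := by
      intro y hy
      rw [Finset.mem_image] at hy
      obtain ⟨x, hx, rfl⟩ := hy
      have hxm := Finset.mem_range.1 (hXsub hx)
      rw [Finset.mem_sdiff]
      exact ⟨Finset.mem_range.2 (wr_lt (by omega) (by omega)), hkey x hx⟩
    have hinj : (X.image (fun x => wr m (x + (m / 2 + 1)))).card = X.card := by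
      rw [Finset.card_image_of_injOn]
      intro a ha b hb
      have ha' := Finset.mem_range.1 (hXsub ha)
      have hb' := Finset.mem_range.1 (hXsub hb)
      intro hab
      simp only at hab
      unfold wr at hab
      split_ifs at hab <;> omega
    have hcard := Finset.card_le_card himg
    rw [hinj, Finset.card_sdiff_of_subset hXsub, Finset.card_range] at hcard
    omega
  · -- even m : the pairs are determined by lo < m/2
    refine le_trans (Finset.card_le_card_of_injOn
      (t := Finset.range (m / 2)) lo ?_ ?_) (le_of_eq (by simp))
    · intro A hA
      rw [hT, Finset.mem_coe, Finset.mem_filter] at hA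
      obtain ⟨-, hA', hdd, -⟩ := hA
      have hlh := lo_lt_hi A
      rw [Finset.mem_coe, Finset.mem_range]
      rw [dd] at hdd
      omega
    · intro A hA B hB hlo
      simp only [Finset.mem_coe, hT, Finset.mem_filter, PT] at hA hB
      obtain ⟨-, hA', hddA, -⟩ := hA
      obtain ⟨-, hB', hddB, -⟩ := hB
      have hlhA := lo_lt_hi A
      have hlhB := lo_lt_hi B
      have hhiA : hi A = lo A + m / 2 := by rw [dd] at hddA; omega
      have hhiB : hi B = lo B + m / 2 := by rw [dd] at hddB; omega
      obtain ⟨i, j, h1, h2, h3⟩ := cyc_desc A hA'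
      obtain ⟨i', j', h1', h2', h3'⟩ := cyc_desc B hB'
      have hii : i = i' := Fin.ext (by rw [h2, h2', hlo])
      have hjj : j = j' := Fin.ext (by rw [h3, h3', hhiA, hhiB, hlo])
      exact Subtype.ext (by rw [h1, h1', hii, hjj])

lemma key_arith (hm : 4 ≤ m) :
    m * (m / 2) / 2 = m * (m / 2 / 2) + (if m / 2 % 2 = 1 then m / 2 else 0) := by
  have hev : ∀ Y : ℕ, (Y * 2) / 2 = Y := fun Y => by omega
  have hodd : ∀ Y : ℕ, (Y * 2 + 1) / 2 = Y := fun Y => by omega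
  rcases Nat.even_or_odd (m / 2) with ⟨t, ht⟩ | ⟨t, ht⟩
  · rw [if_neg (by omega)]
    rw [ht]
    have h2 : (t + t) / 2 = t := by omega
    rw [h2]
    have h3 : m * (t + t) = m * t * 2 := by ring
    rw [h3, hev]
    simp
  · rw [if_pos (by omega)]
    rw [ht]
    have h2 : (2 * t + 1) / 2 = t := by omega
    rw [h2]
    rcases Nat.even_or_odd m with ⟨k, hk⟩ | ⟨k, hk⟩
    · have hkd : k = 2 * t + 1 := by omega
      subst hkd; subst hk
      have h3 : ((2 * t + 1) + (2 * t + 1)) * (2 * t + 1) =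
          (((2 * t + 1) + (2 * t + 1)) * t + (2 * t + 1)) * 2 := by ring
      rw [h3, hev]
    · have hkd : k = 2 * t + 1 := by omega
      subst hkd; subst hk
      have h3 : (2 * (2 * t + 1) + 1) * (2 * t + 1) =
          ((2 * (2 * t + 1) + 1) * t + (2 * t + 1)) * 2 + 1 := by ring
      rw [h3, hodd]

theorem card_le (hm : 4 ≤ m) (S : Finset (Vtx m))
    (hind : ∀ a ∈ S, ∀ b ∈ S, ¬ (DV m).Adj a b) : S.card ≤ m * (m / 2) / 2 := by
  have hsplit : (S.filter (PT m)).card + (S.filter (fun A => ¬ PT m A)).card = S.card :=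
    Finset.card_filter_add_card_filter_not (p := PT m)
  calc S.card = (S.filter (PT m)).card + (S.filter (fun A => ¬ PT m A)).card := hsplit.symm
    _ ≤ (if m / 2 % 2 = 1 then m / 2 else 0) + m * (m / 2 / 2) :=
        Nat.add_le_add (T_bound hm S hind) (S0_bound hm S hind)
    _ = m * (m / 2 / 2) + (if m / 2 % 2 = 1 then m / 2 else 0) := Nat.add_comm _ _
    _ = m * (m / 2) / 2 := (key_arith hm).symm

/-! ### Lower bound: an explicit independent set -/

lemma card_odd_filter (n : ℕ) :
    ((Finset.range n).filter (fun d => d % 2 = 1)).card = n / 2 := by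
  induction n with
  | zero => simp
  | succ k ih => rw [Finset.range_add_one, Finset.filter_insert]; split <;> simp [ih] <;> omega

def Bset (m : ℕ) : Finset (ℕ × ℕ) :=
  (Finset.range m ×ˢ (Finset.range (m / 2)).filter (fun d => d % 2 = 1)) ∪
  (if m / 2 % 2 = 1 then (Finset.range (m / 2)) ×ˢ {m / 2} else ∅)

lemma mem_Bset {m : ℕ} {c : ℕ × ℕ} : c ∈ Bset m ↔
    ((c.1 < m ∧ c.2 % 2 = 1 ∧ c.2 < m / 2) ∨
     (m / 2 % 2 = 1 ∧ c.1 < m / 2 ∧ c.2 = m / 2)) := by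
  unfold Bset
  rw [Finset.mem_union]
  split
  · rename_i h
    simp only [Finset.mem_product, Finset.mem_range, Finset.mem_filter, Finset.mem_singleton]
    tauto
  · rename_i h
    simp only [Finset.mem_product, Finset.mem_range, Finset.mem_filter,
      Finset.notMem_empty, or_false]
    tauto

lemma Bset_card (hm : 4 ≤ m) : (Bset m).card = m * (m / 2) / 2 := by
  have hdisj : Disjoint
      (Finset.range m ×ˢ (Finset.range (m / 2)).filter (fun d => d % 2 = 1))
      (if m / 2 % 2 = 1 then (Finset.range (m / 2)) ×ˢ ({m / 2} : Finset ℕ) else ∅) := by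
    rw [Finset.disjoint_left]
    intro c hc1 hc2
    simp only [Finset.mem_product, Finset.mem_filter, Finset.mem_range] at hc1
    split at hc2
    · simp only [Finset.mem_product, Finset.mem_singleton, Finset.mem_range] at hc2
      have h1 := hc1.2.2
      have h2 := hc2.2
      omega
    · exact absurd hc2 (Finset.notMem_empty _)
  rw [Bset, Finset.card_union_of_disjoint hdisj, Finset.card_product, card_odd_filter,
    Finset.card_range, key_arith hm]
  congr 1
  split <;> simp [Finset.card_product]

lemma Bset_cond (hm : 4 ≤ m) {c : ℕ × ℕ} (hc : c ∈ Bset m) :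
    c.1 < m ∧ 1 ≤ c.2 ∧ c.2 ≤ m / 2 := by
  rw [mem_Bset] at hc; omega

noncomputable def mkv (hm : 4 ≤ m) (c : ℕ × ℕ) : Vtx m :=
  if h : c.1 < m ∧ 1 ≤ c.2 ∧ c.2 ≤ m / 2 then
    ⟨{inl ⟨c.1, h.1⟩, inl ⟨wr m (c.1 + c.2), wr_lt (by omega) (by omega)⟩},
      Finset.card_pair (by
        simp only [ne_eq, Sum.inl.injEq, Fin.mk.injEq]
        unfold wr; split <;> omega)⟩
  else ⟨{inl ⟨0, by omega⟩, inr ()}, Finset.card_pair (by simp)⟩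

lemma mkv_spec (hm : 4 ≤ m) {c : ℕ × ℕ} (h : c.1 < m ∧ 1 ≤ c.2 ∧ c.2 ≤ m / 2) :
    ∃ i j : Fin m, (mkv hm c).1 = {inl i, inl j} ∧ i.val = c.1 ∧ j.val = wr m (c.1 + c.2) := by
  rw [mkv, dif_pos h]
  exact ⟨_, _, rfl, rfl, rfl⟩

lemma mkv_inj (hm : 4 ≤ m) : Set.InjOn (mkv hm) (Bset m) := by
  intro c hc c' hc' heq
  rw [Finset.mem_coe, mem_Bset] at hc hc'
  have h1 := Bset_cond hm (mem_Bset.2 hc)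
  have h2 := Bset_cond hm (mem_Bset.2 hc')
  obtain ⟨i, j, hA1, hA2, hA3⟩ := mkv_spec hm h1
  obtain ⟨i', j', hB1, hB2, hB3⟩ := mkv_spec hm h2
  have hset : ({inl i, inl j} : Finset (Fin m ⊕ Unit)) = {inl i', inl j'} := by
    rw [← hA1, ← hB1, heq]
  have hvals : (i.val = i'.val ∧ j.val = j'.val) ∨ (i.val = j'.val ∧ j.val = i'.val) := by
    rcases pair_eq_cases hset with ⟨e1, e2⟩ | ⟨e1, e2⟩
    · exact Or.inl ⟨congrArg Fin.val (Sum.inl.inj e1), congrArg Fin.val (Sum.inl.inj e2)⟩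
    · exact Or.inr ⟨congrArg Fin.val (Sum.inl.inj e1), congrArg Fin.val (Sum.inl.inj e2)⟩
  rw [hA2, hA3, hB2, hB3] at hvals
  have : c.1 = c'.1 ∧ c.2 = c'.2 := by
    unfold wr at hvals
    split_ifs at hvals <;> omega
  exact Prod.ext this.1 this.2

lemma Sstar_indep (hm : 4 ≤ m) :
    ∀ A ∈ (Bset m).image (mkv hm), ∀ B ∈ (Bset m).image (mkv hm), ¬ (DV m).Adj A B := by
  intro A hA B hB hadj
  rw [Finset.mem_image] at hA hB
  obtain ⟨c, hc, rfl⟩ := hA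
  obtain ⟨c', hc', rfl⟩ := hB
  have hBm := mem_Bset.1 hc
  have hBm' := mem_Bset.1 hc'
  have h1 := Bset_cond hm hc
  have h2 := Bset_cond hm hc'
  obtain ⟨i, j, hA1, hA2, hA3⟩ := mkv_spec hm h1
  obtain ⟨i', j', hB1, hB2, hB3⟩ := mkv_spec hm h2
  have hij : (inl i : Fin m ⊕ Unit) ≠ inl j := by
    simp only [ne_eq, Sum.inl.injEq, Fin.ext_iff, hA2, hA3]
    unfold wr; split <;> omega
  have hij' : (inl i' : Fin m ⊕ Unit) ≠ inl j' := by
    simp only [ne_eq, Sum.inl.injEq, Fin.ext_iff, hB2, hB3]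
    unfold wr; split <;> omega
  rcases adj_elim hadj hA1 hB1 hij hij' with ⟨e1, -, e2⟩ | ⟨e1, -, e2⟩ | ⟨e1, -, e2⟩ | ⟨e1, -, e2⟩
  all_goals
    have hv := congrArg Fin.val (Sum.inl.inj e1)
  all_goals
    have hcyc := ((wheel_adj_inl_inl _ _).1 e2).2
  all_goals
    simp only [hA2, hA3, hB2, hB3] at hv hcyc
  all_goals
    simp only [cyc, wr] at hv hcyc
  all_goals
    split_ifs at hv hcyc <;> omega

lemma Sstar_card (hm : 4 ≤ m) : ((Bset m).image (mkv hm)).card = m * (m / 2) / 2 := by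
  rw [Finset.card_image_of_injOn (mkv_inj hm), Bset_card hm]

end WheelPf

/-- For every integer `m ≥ 4`, the independence number of the double vertex graph of
the wheel graph `W_{m,1}` equals `⌊(m/2)·⌊m/2⌋⌋`. -/
theorem indepNum_doubleVertexGraph_wheel (m : ℕ) (hm : 4 ≤ m) :
    indepNum (doubleVertexGraph (wheelG m)) = m * (m / 2) / 2 := by
  classical
  unfold indepNum
  have hmem : m * (m / 2) / 2 ∈ {n | ∃ s : Finset (WheelPf.Vtx m), s.card = n ∧
      ∀ a ∈ s, ∀ b ∈ s, ¬ (doubleVertexGraph (wheelG m)).Adj a b} :=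
    ⟨(WheelPf.Bset m).image (WheelPf.mkv hm), WheelPf.Sstar_card hm, WheelPf.Sstar_indep hm⟩
  have hub : ∀ n ∈ {n | ∃ s : Finset (WheelPf.Vtx m), s.card = n ∧
      ∀ a ∈ s, ∀ b ∈ s, ¬ (doubleVertexGraph (wheelG m)).Adj a b}, n ≤ m * (m / 2) / 2 := by
    rintro n ⟨s, rfl, hind⟩
    exact WheelPf.card_le hm s hind
  exact le_antisymm (csSup_le ⟨_, hmem⟩ hub) (le_csSup ⟨_, hub⟩ hmem)
end

section
/- For every integer n ≥ 3, the pair graph C(P_n) of the path P_n is isomorphic to the double vertex graph of the path P_{n+1}. -/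
namespace PGProof

lemma pathG_adj {m : ℕ} {x y : Fin m} :
    (pathG m).Adj x y ↔ ((x:ℕ) + 1 = y ∨ (y:ℕ) + 1 = x) := by
  simp only [pathG, SimpleGraph.fromRel_adj]
  constructor
  · rintro ⟨-, h⟩; exact h
  · intro h
    refine ⟨?_, h⟩
    rw [Ne, Fin.ext_iff]
    omega

lemma sym2_sorted {m : ℕ} (s : Sym2 (Fin m)) : ∃ i j : Fin m, i ≤ j ∧ s = s(i, j) := by
  induction s using Sym2.ind with
  | _ x y =>
    rcases le_total x y with h | h
    · exact ⟨x, y, h, rfl⟩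
    · exact ⟨y, x, h, Sym2.eq_swap⟩

lemma pairAdj {m : ℕ} {i j k l : Fin m} (hij : i ≤ j) (hkl : k ≤ l) :
    (pairGraph (pathG m)).Adj s(i,j) s(k,l) ↔
      ((i:ℕ) = (k:ℕ) ∧ ((j:ℕ)+1 = (l:ℕ) ∨ (l:ℕ)+1 = (j:ℕ))) ∨
      ((j:ℕ) = (l:ℕ) ∧ ((i:ℕ)+1 = (k:ℕ) ∨ (k:ℕ)+1 = (i:ℕ))) := by
  have hij' := Fin.le_def.mp hij
  have hkl' := Fin.le_def.mp hkl
  simp only [pairGraph, SimpleGraph.fromRel_adj]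
  constructor
  · rintro ⟨hne, h | h⟩ <;>
    · obtain ⟨a, x, y, hxy, hs, ht⟩ := h
      rw [pathG_adj] at hxy
      rw [Sym2.eq_iff] at hs ht
      rcases hs with ⟨h1, h2⟩ | ⟨h1, h2⟩ <;> rcases ht with ⟨h3, h4⟩ | ⟨h3, h4⟩ <;>
        (rw [Fin.ext_iff] at h1 h2 h3 h4; omega)
  · intro h
    have hne : s(i,j) ≠ s(k,l) := by
      rw [Ne, Sym2.eq_iff]
      rintro (⟨h1, h2⟩ | ⟨h1, h2⟩) <;> (rw [Fin.ext_iff] at h1 h2; omega)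
    refine ⟨hne, Or.inl ?_⟩
    rcases h with ⟨h1, h2⟩ | ⟨h1, h2⟩
    · have hik : i = k := Fin.ext h1
      exact ⟨i, j, l, by rw [pathG_adj]; omega, rfl, by rw [hik]⟩
    · have hjl : j = l := Fin.ext h1
      exact ⟨j, i, k, by rw [pathG_adj]; omega, Sym2.eq_swap, by rw [hjl]; exact Sym2.eq_swap⟩

lemma card_pair_cs {m : ℕ} {i j : Fin m} (hij : i ≤ j) :
    ({i.castSucc, j.succ} : Finset (Fin (m+1))).card = 2 := by
  have hij' := Fin.le_def.mp hij
  refine Finset.card_pair ?_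
  rw [Ne, Fin.ext_iff, Fin.coe_castSucc, Fin.val_succ]
  omega

def fS {m : ℕ} (s : Sym2 (Fin m)) : Finset (Fin (m+1)) :=
  Sym2.lift ⟨fun i j => {(min i j).castSucc, (max i j).succ},
    fun a b => by dsimp only; rw [min_comm, max_comm]⟩ s

lemma fS_mk {m : ℕ} {i j : Fin m} (hij : i ≤ j) :
    fS s(i,j) = {i.castSucc, j.succ} := by
  simp only [fS, Sym2.lift_mk, min_eq_left hij, max_eq_right hij]

lemma fS_card {m : ℕ} (s : Sym2 (Fin m)) : (fS s).card = 2 := by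
  obtain ⟨i, j, hij, rfl⟩ := sym2_sorted s
  rw [fS_mk hij]
  exact card_pair_cs hij

def f {m : ℕ} (s : Sym2 (Fin m)) : {A : Finset (Fin (m+1)) // A.card = 2} :=
  ⟨fS s, fS_card s⟩

lemma f_inj {m : ℕ} : Function.Injective (f (m := m)) := by
  intro s t h
  obtain ⟨i, j, hij, rfl⟩ := sym2_sorted s
  obtain ⟨k, l, hkl, rfl⟩ := sym2_sorted t
  have hij' := Fin.le_def.mp hij
  have hkl' := Fin.le_def.mp hkl
  have h' : fS s(i,j) = fS s(k,l) := congrArg Subtype.val h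
  rw [fS_mk hij, fS_mk hkl, Finset.ext_iff] at h'
  have m1 := h' i.castSucc
  have m2 := h' j.succ
  have m3 := h' k.castSucc
  have m4 := h' l.succ
  simp only [Finset.mem_insert, Finset.mem_singleton, Fin.ext_iff, Fin.coe_castSucc,
    Fin.val_succ, true_or, or_true, true_and, and_true, not_true,
    false_and, and_false, false_or, or_false, true_iff, iff_true] at m1 m2 m3 m4
  have hik : i = k := Fin.ext (by omega)
  have hjl : j = l := Fin.ext (by omega)
  rw [hik, hjl]

lemma f_surj {m : ℕ} : Function.Surjective (f (m := m)) := by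
  have key : ∀ a b : Fin (m+1), a < b → ∀ h : ({a, b} : Finset (Fin (m+1))).card = 2,
      ∃ s, f s = ⟨{a, b}, h⟩ := by
    intro a b hab h
    have hab' := Fin.lt_def.mp hab
    have hbm : (b:ℕ) ≤ m := by omega
    have ha : (a:ℕ) < m := by omega
    have hb : (b:ℕ) - 1 < m := by omega
    refine ⟨s(⟨(a:ℕ), ha⟩, ⟨(b:ℕ)-1, hb⟩), Subtype.ext ?_⟩
    show fS _ = {a, b}
    rw [fS_mk (by rw [Fin.le_def]; show (a:ℕ) ≤ (b:ℕ)-1; omega)]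
    have e1 : (⟨(a:ℕ), ha⟩ : Fin m).castSucc = a := by
      apply Fin.ext; simp
    have e2 : (⟨(b:ℕ)-1, hb⟩ : Fin m).succ = b := by
      apply Fin.ext; rw [Fin.val_succ]; show (b:ℕ) - 1 + 1 = (b:ℕ); omega
    rw [e1, e2]
  rintro ⟨A, hA⟩
  obtain ⟨a, b, hab, rfl⟩ := Finset.card_eq_two.mp hA
  rcases lt_or_gt_of_ne hab with h | h
  · exact key a b h hA
  · have hcomm : ({a, b} : Finset (Fin (m+1))) = {b, a} := Finset.pair_comm a b
    obtain ⟨s, hs⟩ := key b a h (by rw [← hcomm]; exact hA)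
    exact ⟨s, by rw [hs]; exact Subtype.ext hcomm.symm⟩

lemma symmDiff_pair {α : Type*} [DecidableEq α] {a b c : α}
    (hab : a ≠ b) (hac : a ≠ c) (hbc : b ≠ c) :
    symmDiff ({a, b} : Finset α) {a, c} = {b, c} := by
  ext x
  simp only [Finset.mem_symmDiff, Finset.mem_insert, Finset.mem_singleton]
  constructor
  · rintro (⟨h1 | h1, h2⟩ | ⟨h1 | h1, h2⟩) <;> tauto
  · rintro (rfl | rfl)
    · exact Or.inl ⟨Or.inr rfl, by rintro (h | h) <;> simp_all⟩
    · exact Or.inr ⟨Or.inr rfl, by rintro (h | h) <;> simp_all⟩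

set_option maxHeartbeats 1600000 in
lemma dvAdj {m : ℕ} {i j k l : Fin m} (hij : i ≤ j) (hkl : k ≤ l)
    (h1 : ({i.castSucc, j.succ} : Finset (Fin (m+1))).card = 2)
    (h2 : ({k.castSucc, l.succ} : Finset (Fin (m+1))).card = 2) :
    (doubleVertexGraph (pathG (m+1))).Adj ⟨_, h1⟩ ⟨_, h2⟩ ↔
      ((i:ℕ) = (k:ℕ) ∧ ((j:ℕ)+1 = (l:ℕ) ∨ (l:ℕ)+1 = (j:ℕ))) ∨
      ((j:ℕ) = (l:ℕ) ∧ ((i:ℕ)+1 = (k:ℕ) ∨ (k:ℕ)+1 = (i:ℕ))) := by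
  have hij' := Fin.le_def.mp hij
  have hkl' := Fin.le_def.mp hkl
  simp only [doubleVertexGraph, tokenGraph, SimpleGraph.fromRel_adj]
  constructor
  · rintro ⟨hne, h | h⟩ <;>
    · obtain ⟨u, v, huv, hsd⟩ := h
      rw [pathG_adj] at huv
      rw [Finset.ext_iff] at hsd
      have m1 := hsd i.castSucc
      have m2 := hsd j.succ
      have m3 := hsd k.castSucc
      have m4 := hsd l.succ
      have m5 := hsd u
      have m6 := hsd v
      simp only [Finset.mem_symmDiff, Finset.mem_insert, Finset.mem_singleton, Fin.ext_iff,
        Fin.coe_castSucc, Fin.val_succ, true_or, or_true, true_and, and_true, not_true,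
    false_and, and_false, false_or, or_false, true_iff, iff_true] at m1 m2 m3 m4 m5 m6
      clear hne hsd h1 h2
      omega
  · intro hD
    have hne : (⟨_, h1⟩ : {A : Finset (Fin (m+1)) // A.card = 2}) ≠ ⟨_, h2⟩ := by
      intro he
      have he' := congrArg Subtype.val he
      rw [Finset.ext_iff] at he'
      have m1 := he' i.castSucc
      have m2 := he' j.succ
      have m3 := he' k.castSucc
      have m4 := he' l.succ
      simp only [Finset.mem_insert, Finset.mem_singleton, Fin.ext_iff, Fin.coe_castSucc,
        Fin.val_succ, true_or, or_true, true_and, and_true, not_true,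
    false_and, and_false, false_or, or_false, true_iff, iff_true] at m1 m2 m3 m4
      omega
    refine ⟨hne, Or.inl ?_⟩
    rcases hD with ⟨e1, e2⟩ | ⟨e1, e2⟩
    · have hik : i.castSucc = k.castSucc := by
        apply Fin.ext; rw [Fin.coe_castSucc, Fin.coe_castSucc]; exact e1
      refine ⟨j.succ, l.succ, ?_, ?_⟩
      · rw [pathG_adj, Fin.val_succ, Fin.val_succ]; omega
      · rw [← hik]
        refine symmDiff_pair ?_ ?_ ?_ <;>
          (rw [Ne, Fin.ext_iff]; simp only [Fin.coe_castSucc, Fin.val_succ]; omega)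
    · have hjl : j.succ = l.succ := by
        apply Fin.ext; rw [Fin.val_succ, Fin.val_succ]; omega
      refine ⟨i.castSucc, k.castSucc, ?_, ?_⟩
      · rw [pathG_adj, Fin.coe_castSucc, Fin.coe_castSucc]; omega
      · rw [Finset.pair_comm i.castSucc j.succ, Finset.pair_comm k.castSucc l.succ, hjl]
        refine symmDiff_pair ?_ ?_ ?_ <;>
          (rw [Ne, Fin.ext_iff]; simp only [Fin.coe_castSucc, Fin.val_succ]; omega)

end PGProof

open PGProof in
/-- For every integer `n ≥ 3`, the pair graph `C(P_n)` is isomorphic to the double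
vertex graph of the path `P_{n+1}`. -/
theorem pairGraph_path_iso_doubleVertexGraph_path (n : ℕ) (hn : 3 ≤ n) :
    Nonempty (pairGraph (pathG n) ≃g doubleVertexGraph (pathG (n + 1))) := by
  refine ⟨⟨Equiv.ofBijective f ⟨f_inj, f_surj⟩, ?_⟩⟩
  intro s t
  change (doubleVertexGraph (pathG (n+1))).Adj (f s) (f t) ↔ (pairGraph (pathG n)).Adj s t
  obtain ⟨i, j, hij, rfl⟩ := sym2_sorted s
  obtain ⟨k, l, hkl, rfl⟩ := sym2_sorted t
  have e1 : f s(i,j) = ⟨{i.castSucc, j.succ}, card_pair_cs hij⟩ := Subtype.ext (fS_mk hij)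
  have e2 : f s(k,l) = ⟨{k.castSucc, l.succ}, card_pair_cs hkl⟩ := Subtype.ext (fS_mk hkl)
  rw [e1, e2, dvAdj hij hkl, pairAdj hij hkl]
end

section
/- For every integer m ≥ 1, the independence number of the pair graph of the fan graph F_{m,1} equals the independence number of the pair graph of the path P_m plus 1; equivalently α(C(F_{m,1})) = ⌊(m+1)²/4⌋ + 1 for m ≥ 3. -/
open Finset

namespace FanPairProof

/-! ### Counting -/

lemma parity_filter_card (n r : ℕ) :
    ((range n).filter (fun a => a % 2 = r)).card = (n + 1 - r) / 2 ∨ 1 < r := by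
  rcases Nat.lt_or_ge r 2 with hr | hr
  · left
    induction n with
    | zero => simp; omega
    | succ n ih =>
      rw [Finset.range_add_one, Finset.filter_insert]
      by_cases h : n % 2 = r
      · rw [if_pos h, Finset.card_insert_of_notMem (by simp)]
        omega
      · rw [if_neg h]; omega
  · right; omega

def ET (m : ℕ) : Finset (ℕ × ℕ) :=
  (range m ×ˢ range m).filter (fun p => p.1 ≤ p.2 ∧ p.1 % 2 = p.2 % 2)

lemma mem_ET {m a b : ℕ} : (a, b) ∈ ET m ↔ a < m ∧ b < m ∧ a ≤ b ∧ a % 2 = b % 2 := by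
  simp only [ET, Finset.mem_filter, Finset.mem_product, Finset.mem_range]
  tauto

lemma ET_succ (m : ℕ) :
    ET (m + 1) = ET m ∪ ((range (m + 1)).filter (fun a => a % 2 = m % 2)).image
      (fun a => (a, m)) := by
  ext ⟨a, b⟩
  simp only [mem_ET, Finset.mem_union, Finset.mem_image, Finset.mem_filter, Finset.mem_range]
  constructor
  · rintro ⟨h1, h2, h3, h4⟩
    rcases Nat.lt_or_ge b m with h | h
    · exact Or.inl ⟨by omega, h, h3, h4⟩
    · right
      refine ⟨a, ⟨by omega, by omega⟩, ?_⟩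
      have hb : b = m := by omega
      subst hb; rfl
  · rintro (⟨h1, h2, h3, h4⟩ | ⟨c, ⟨hc1, hc2⟩, hc3⟩)
    · omega
    · rw [Prod.mk.injEq] at hc3; omega

lemma card_ET (m : ℕ) : 4 * (ET m).card = (m + 1) * (m + 1) - 1 + m % 2 := by
  induction m with
  | zero =>
    have : ET 0 = ∅ := by
      ext ⟨a, b⟩; simp [mem_ET]
    simp [this]
  | succ m ih =>
    rw [ET_succ, Finset.card_union_of_disjoint, Finset.card_image_of_injective _
      (fun x y h => by simpa using h)]
    · rcases parity_filter_card (m + 1) (m % 2) with h1 | h1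
      swap
      · omega
      have h3 : (m + 1 + 1) * (m + 1 + 1) = (m + 1) * (m + 1) + 2 * m + 3 := by ring
      rw [h1]
      have h4 : 1 ≤ (m + 1) * (m + 1) := Nat.one_le_iff_ne_zero.mpr (by positivity)
      have h0 : m % 2 = 0 ∨ m % 2 = 1 := by omega
      rcases h0 with h0 | h0 <;> rw [h0] at ih ⊢ <;> omega
    · rw [Finset.disjoint_right]
      rintro ⟨a, b⟩ h h'
      simp only [Finset.mem_image, Finset.mem_filter, Finset.mem_range] at h
      obtain ⟨c, -, hc⟩ := h
      rw [mem_ET] at h'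
      obtain ⟨-, h2, -, -⟩ := h'
      rw [Prod.mk.injEq] at hc
      obtain ⟨rfl, rfl⟩ := hc
      omega

lemma card_ET' (m : ℕ) : (ET m).card = (m + 1) ^ 2 / 4 := by
  have h := card_ET m
  have h2 : (m + 1) ^ 2 = (m + 1) * (m + 1) := sq (m + 1)
  have h4 : 1 ≤ (m + 1) * (m + 1) := Nat.one_le_iff_ne_zero.mpr (by positivity)
  omega


/-! ### Adjacency lemmas -/

lemma path_adj {m : ℕ} {i j : Fin m} :
    (pathG m).Adj i j ↔ ((i : ℕ) + 1 = j ∨ (j : ℕ) + 1 = i) := by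
  simp only [pathG, SimpleGraph.fromRel_adj, ne_eq, Fin.ext_iff]
  omega

lemma fan_adj_inl {m : ℕ} {i j : Fin m} :
    (fanG m).Adj (Sum.inl i) (Sum.inl j) ↔ (pathG m).Adj i j := by
  constructor
  · rintro ⟨hne, h | h⟩ <;>
    · rcases h with ⟨x, y, hxy, hx, hy⟩ | ⟨h1, h2⟩
      · cases hx; cases hy
        first
        | exact hxy
        | exact hxy.symm
      · simp at h2
  · intro h
    refine ⟨by simp [h.ne], Or.inl (Or.inl ⟨i, j, h, rfl, rfl⟩)⟩

lemma fan_adj_hub {m : ℕ} (i : Fin m) : (fanG m).Adj (Sum.inl i) (Sum.inr ()) := by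
  exact ⟨by simp, Or.inl (Or.inr (by simp))⟩

lemma fan_not_adj_hub_hub {m : ℕ} : ¬ (fanG m).Adj (Sum.inr ()) (Sum.inr ()) :=
  (fanG m).irrefl

lemma pairGraph_adj {V : Type*} {G : SimpleGraph V} {a x y : V} (h : G.Adj x y) :
    (pairGraph G).Adj (Sym2.mk a x) (Sym2.mk a y) := by
  refine ⟨fun he => h.ne (Sym2.congr_right.mp he), Or.inl ⟨a, x, y, h, rfl, rfl⟩⟩

lemma pairGraph_adj_elim {V : Type*} {G : SimpleGraph V} {z w : Sym2 V}
    (h : (pairGraph G).Adj z w) :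
    ∃ a x y, G.Adj x y ∧ z = Sym2.mk a x ∧ w = Sym2.mk a y := by
  obtain ⟨-, h | h⟩ := h
  · exact h
  · obtain ⟨a, x, y, hxy, h1, h2⟩ := h
    exact ⟨a, y, x, hxy.symm, h2, h1⟩

/-! ### Canonical representation of elements of `Sym2` -/

def cpP (m : ℕ) : Sym2 (Fin m) → ℕ × ℕ :=
  Sym2.lift ⟨fun x y => (min (x : ℕ) (y : ℕ), max (x : ℕ) (y : ℕ)),
    fun x y => by simp [min_comm, max_comm]⟩

lemma cpP_spec {m : ℕ} (z : Sym2 (Fin m)) :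
    ∃ x y : Fin m, z = Sym2.mk x y ∧ (x : ℕ) ≤ (y : ℕ) ∧ cpP m z = ((x : ℕ), (y : ℕ)) := by
  induction z using Sym2.ind with
  | _ u v =>
    rcases le_total (u : ℕ) (v : ℕ) with h | h
    · exact ⟨u, v, rfl, h, by simp [cpP, min_eq_left h, max_eq_right h]⟩
    · exact ⟨v, u, Sym2.eq_swap, h, by simp [cpP, min_eq_right h, max_eq_left h]⟩

def code (m : ℕ) : Fin m ⊕ Unit → ℕ := Sum.elim (fun i => (i : ℕ)) (fun _ => m)

lemma code_inl {m : ℕ} (i : Fin m) : code m (Sum.inl i) = (i : ℕ) := rfl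
lemma code_inr {m : ℕ} (u : Unit) : code m (Sum.inr u) = m := rfl

lemma code_lt_iff {m : ℕ} (x : Fin m ⊕ Unit) : code m x < m ↔ x.isLeft := by
  cases x with
  | inl i => simp [code, i.isLt]
  | inr u => simp [code]

def cpF (m : ℕ) : Sym2 (Fin m ⊕ Unit) → ℕ × ℕ :=
  Sym2.lift ⟨fun x y => (min (code m x) (code m y), max (code m x) (code m y)),
    fun x y => by simp [min_comm, max_comm]⟩

lemma cpF_spec {m : ℕ} (z : Sym2 (Fin m ⊕ Unit)) :
    ∃ x y : Fin m ⊕ Unit, z = Sym2.mk x y ∧ code m x ≤ code m y ∧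
      cpF m z = (code m x, code m y) := by
  induction z using Sym2.ind with
  | _ u v =>
    rcases le_total (code m u) (code m v) with h | h
    · exact ⟨u, v, rfl, h, by simp [cpF, min_eq_left h, max_eq_right h]⟩
    · exact ⟨v, u, Sym2.eq_swap, h, by simp [cpF, min_eq_right h, max_eq_left h]⟩

/-! ### Path: upper bound -/

lemma indep_card_le_path {m : ℕ} (s : Finset (Sym2 (Fin m)))
    (hs : ∀ a ∈ s, ∀ b ∈ s, ¬ (pairGraph (pathG m)).Adj a b) :
    s.card ≤ (ET m).card := by
  apply Finset.card_le_card_of_injOn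
    (fun z => (fun p : ℕ × ℕ => if p.1 % 2 = p.2 % 2 then p else (p.1, p.2 - 1)) (cpP m z))
  · intro z hz
    obtain ⟨x, y, hzxy, hxy, hc⟩ := cpP_spec z
    simp only [hc]
    have hx := x.isLt
    have hy := y.isLt
    by_cases hp : (x : ℕ) % 2 = (y : ℕ) % 2
    · rw [if_pos hp]
      exact mem_ET.mpr ⟨hx, hy, hxy, hp⟩
    · rw [if_neg hp]
      exact mem_ET.mpr ⟨hx, by omega, by omega, by omega⟩
  · intro z hz w hw heq
    obtain ⟨x, y, hzxy, hxy, hc⟩ := cpP_spec z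
    obtain ⟨u, v, hwuv, huv, hc'⟩ := cpP_spec w
    simp only [hc, hc'] at heq
    by_cases hp : (x : ℕ) % 2 = (y : ℕ) % 2 <;> by_cases hq : (u : ℕ) % 2 = (v : ℕ) % 2
    · rw [if_pos hp, if_pos hq, Prod.mk.injEq] at heq
      rw [hzxy, hwuv]
      have : x = u := Fin.ext heq.1
      have : y = v := Fin.ext heq.2
      subst this; congr 1
    · rw [if_pos hp, if_neg hq, Prod.mk.injEq] at heq
      exfalso
      have hxu : x = u := Fin.ext heq.1
      have hadj : (pathG m).Adj y v := path_adj.mpr (by omega)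
      refine hs z hz w hw ?_
      rw [hzxy, hwuv, hxu]
      exact pairGraph_adj hadj
    · rw [if_neg hp, if_pos hq, Prod.mk.injEq] at heq
      exfalso
      have hxu : x = u := Fin.ext heq.1
      have hadj : (pathG m).Adj y v := path_adj.mpr (by omega)
      refine hs z hz w hw ?_
      rw [hzxy, hwuv, hxu]
      exact pairGraph_adj hadj
    · rw [if_neg hp, if_neg hq, Prod.mk.injEq] at heq
      have hxu : x = u := Fin.ext heq.1
      have hyv : y = v := Fin.ext (by omega)
      rw [hzxy, hwuv, hxu, hyv]

/-! ### Path: lower bound construction -/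

def ETF (m : ℕ) : Finset (Fin m × Fin m) :=
  (univ ×ˢ univ).filter (fun p => ((p.1 : ℕ) ≤ (p.2 : ℕ) ∧ (p.1 : ℕ) % 2 = (p.2 : ℕ) % 2))

lemma mem_ETF {m : ℕ} {p : Fin m × Fin m} :
    p ∈ ETF m ↔ (p.1 : ℕ) ≤ (p.2 : ℕ) ∧ (p.1 : ℕ) % 2 = (p.2 : ℕ) % 2 := by
  simp [ETF]

lemma card_ETF (m : ℕ) : (ETF m).card = (ET m).card := by
  apply Finset.card_bij (fun p _ => ((p.1 : ℕ), (p.2 : ℕ)))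
  · intro p hp
    rw [mem_ETF] at hp
    exact mem_ET.mpr ⟨p.1.isLt, p.2.isLt, hp.1, hp.2⟩
  · intro p hp q hq h
    rw [Prod.mk.injEq] at h
    exact Prod.ext (Fin.ext h.1) (Fin.ext h.2)
  · rintro ⟨a, b⟩ hab
    rw [mem_ET] at hab
    exact ⟨(⟨a, hab.1⟩, ⟨b, hab.2.1⟩), mem_ETF.mpr ⟨hab.2.2.1, hab.2.2.2⟩, rfl⟩

def SP (m : ℕ) : Finset (Sym2 (Fin m)) :=
  (ETF m).image (fun p => Sym2.mk p.1 p.2)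

lemma card_SP (m : ℕ) : (SP m).card = (ET m).card := by
  rw [SP, Finset.card_image_of_injOn, card_ETF]
  intro p hp q hq h
  simp only [Finset.coe_filter, Set.mem_setOf_eq, Finset.mem_coe, mem_ETF] at hp hq
  rw [Sym2.eq_iff] at h
  rcases h with ⟨h1, h2⟩ | ⟨h1, h2⟩
  · exact Prod.ext h1 h2
  · have e1 : (p.1 : ℕ) = (q.2 : ℕ) := congrArg Fin.val h1
    have e2 : (p.2 : ℕ) = (q.1 : ℕ) := congrArg Fin.val h2
    have : (p.1 : ℕ) = (q.1 : ℕ) ∧ (p.2 : ℕ) = (q.2 : ℕ) := by omega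
    exact Prod.ext (Fin.ext this.1) (Fin.ext this.2)

lemma SP_parity {m : ℕ} {z : Sym2 (Fin m)} (hz : z ∈ SP m) {a x : Fin m}
    (h : z = Sym2.mk a x) : (a : ℕ) % 2 = (x : ℕ) % 2 := by
  obtain ⟨p, hp, rfl⟩ := Finset.mem_image.mp hz
  rw [mem_ETF] at hp
  rw [Sym2.eq_iff] at h
  rcases h with ⟨h1, h2⟩ | ⟨h1, h2⟩ <;> subst h1 <;> subst h2 <;> omega

lemma SP_indep {m : ℕ} : ∀ a ∈ SP m, ∀ b ∈ SP m, ¬ (pairGraph (pathG m)).Adj a b := by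
  intro z hz w hw hadj
  obtain ⟨a, x, y, hxy, h1, h2⟩ := pairGraph_adj_elim hadj
  have p1 := SP_parity hz h1
  have p2 := SP_parity hw h2
  rw [path_adj] at hxy
  omega

/-! ### indepNum basics -/

lemma indepNum_eq {V : Type*} (G : SimpleGraph V) (n : ℕ)
    (h1 : ∃ s : Finset V, s.card = n ∧ ∀ a ∈ s, ∀ b ∈ s, ¬ G.Adj a b)
    (h2 : ∀ s : Finset V, (∀ a ∈ s, ∀ b ∈ s, ¬ G.Adj a b) → s.card ≤ n) :
    indepNum G = n := by
  have hmem : n ∈ {k | ∃ s : Finset V, s.card = k ∧ ∀ a ∈ s, ∀ b ∈ s, ¬ G.Adj a b} := by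
    obtain ⟨s, hc, hi⟩ := h1
    exact ⟨s, hc, hi⟩
  have hub : ∀ k ∈ {k | ∃ s : Finset V, s.card = k ∧ ∀ a ∈ s, ∀ b ∈ s, ¬ G.Adj a b}, k ≤ n := by
    rintro k ⟨s, rfl, hi⟩
    exact h2 s hi
  exact le_antisymm (csSup_le ⟨n, hmem⟩ hub) (le_csSup ⟨n, hub⟩ hmem)

lemma indepNum_path (m : ℕ) : indepNum (pairGraph (pathG m)) = (m + 1) ^ 2 / 4 := by
  apply indepNum_eq
  · exact ⟨SP m, by rw [card_SP, card_ET'], SP_indep⟩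
  · intro s hs
    rw [← card_ET' m]
    exact indep_card_le_path s hs

/-! ### Fan: upper bound -/

def TF (m : ℕ) : Finset (ℕ × ℕ) := insert (m, m) (ET m)

lemma card_TF (m : ℕ) : (TF m).card = (ET m).card + 1 := by
  rw [TF, Finset.card_insert_of_notMem]
  · intro h; rw [mem_ET] at h; omega

def psiF (m : ℕ) : Sym2 (Fin m ⊕ Unit) → ℕ × ℕ :=
  fun z => (fun p : ℕ × ℕ =>
    if p.2 = m then (if p.1 = m then (m, m) else (p.1, p.1))
    else (if p.1 % 2 = p.2 % 2 then p else (p.1, p.2 - 1))) (cpF m z)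

lemma classify {m : ℕ} (z : Sym2 (Fin m ⊕ Unit)) :
    (psiF m z = (m, m) ∧ z = Sym2.mk (Sum.inr ()) (Sum.inr ())) ∨
    (∃ i : Fin m, psiF m z = ((i : ℕ), (i : ℕ)) ∧ z = Sym2.mk (Sum.inl i) (Sum.inr ())) ∨
    (∃ i j : Fin m, (i : ℕ) ≤ (j : ℕ) ∧ z = Sym2.mk (Sum.inl i) (Sum.inl j) ∧
      psiF m z = if (i : ℕ) % 2 = (j : ℕ) % 2 then ((i : ℕ), (j : ℕ))
        else ((i : ℕ), (j : ℕ) - 1)) := by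
  obtain ⟨x, y, hz, hxy, hc⟩ := cpF_spec z
  cases y with
  | inr u =>
    cases u
    cases x with
    | inr u' =>
      cases u'
      left
      refine ⟨?_, hz⟩
      simp [psiF, hc, code_inr]
    | inl i =>
      right; left
      refine ⟨i, ?_, hz⟩
      have hne : (i : ℕ) ≠ m := Nat.ne_of_lt i.isLt
      simp [psiF, hc, code_inr, code_inl, hne]
  | inl j =>
    cases x with
    | inr u =>
      exfalso
      rw [code_inr, code_inl] at hxy
      have := j.isLt
      omega
    | inl i =>
      right; right
      refine ⟨i, j, by rw [code_inl, code_inl] at hxy; exact hxy, hz, ?_⟩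
      have hne : (j : ℕ) ≠ m := Nat.ne_of_lt j.isLt
      simp only [psiF, hc, code_inl]
      rw [if_neg hne]

lemma indep_card_le_fan {m : ℕ} (s : Finset (Sym2 (Fin m ⊕ Unit)))
    (hs : ∀ a ∈ s, ∀ b ∈ s, ¬ (pairGraph (fanG m)).Adj a b) :
    s.card ≤ (ET m).card + 1 := by
  rw [← card_TF]
  apply Finset.card_le_card_of_injOn (psiF m)
  · intro z _
    rcases classify z with ⟨h1, -⟩ | ⟨i, h1, -⟩ | ⟨i, j, hij, -, h1⟩ <;> rw [h1]
    · exact Finset.mem_insert_self _ _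
    · exact Finset.mem_insert_of_mem (mem_ET.mpr ⟨i.isLt, i.isLt, le_refl _, rfl⟩)
    · have hi := i.isLt
      have hj := j.isLt
      split_ifs with hp
      · exact Finset.mem_insert_of_mem (mem_ET.mpr ⟨hi, hj, hij, hp⟩)
      · exact Finset.mem_insert_of_mem (mem_ET.mpr ⟨hi, by omega, by omega, by omega⟩)
  · intro z hz w hw heq
    rcases classify z with ⟨h1, hz'⟩ | ⟨i, h1, hz'⟩ | ⟨i, j, hij, hz', h1⟩ <;>
      rcases classify w with ⟨h2, hw'⟩ | ⟨p, h2, hw'⟩ | ⟨p, q, hpq, hw', h2⟩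
    -- (1,1)
    · rw [hz', hw']
    -- (1,2)
    · exfalso; rw [h1, h2, Prod.mk.injEq] at heq
      have := p.isLt; omega
    -- (1,3)
    · exfalso; rw [h1, h2] at heq
      have := q.isLt
      split_ifs at heq <;> rw [Prod.mk.injEq] at heq <;> omega
    -- (2,1)
    · exfalso; rw [h1, h2, Prod.mk.injEq] at heq
      have := i.isLt; omega
    -- (2,2)
    · rw [h1, h2, Prod.mk.injEq] at heq
      have : i = p := Fin.ext heq.1
      rw [hz', hw', this]
    -- (2,3)
    · exfalso
      have hip : (p : ℕ) = (i : ℕ) := by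
        rw [h1, h2] at heq
        split_ifs at heq <;> rw [Prod.mk.injEq] at heq <;> omega
      have hip' : p = i := Fin.ext hip
      refine hs z hz w hw ?_
      rw [hz', hw', hip']
      exact pairGraph_adj ((fan_adj_hub q).symm)
    -- (3,1)
    · exfalso; rw [h1, h2] at heq
      have := j.isLt
      split_ifs at heq <;> rw [Prod.mk.injEq] at heq <;> omega
    -- (3,2)
    · exfalso
      have hip : (i : ℕ) = (p : ℕ) := by
        rw [h1, h2] at heq
        split_ifs at heq <;> rw [Prod.mk.injEq] at heq <;> omega
      have hip' : i = p := Fin.ext hip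
      refine hs w hw z hz ?_
      rw [hz', hw', hip']
      exact pairGraph_adj ((fan_adj_hub j).symm)
    -- (3,3)
    · rw [h1, h2] at heq
      by_cases c1 : (i : ℕ) % 2 = (j : ℕ) % 2 <;> by_cases c2 : (p : ℕ) % 2 = (q : ℕ) % 2
      · rw [if_pos c1, if_pos c2, Prod.mk.injEq] at heq
        rw [hz', hw', Fin.ext heq.1, Fin.ext heq.2]
      · rw [if_pos c1, if_neg c2, Prod.mk.injEq] at heq
        exfalso
        have hip : i = p := Fin.ext heq.1
        have hadj : (pathG m).Adj j q := path_adj.mpr (by omega)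
        refine hs z hz w hw ?_
        rw [hz', hw', hip]
        exact pairGraph_adj (fan_adj_inl.mpr hadj)
      · rw [if_neg c1, if_pos c2, Prod.mk.injEq] at heq
        exfalso
        have hip : i = p := Fin.ext heq.1
        have hadj : (pathG m).Adj j q := path_adj.mpr (by omega)
        refine hs z hz w hw ?_
        rw [hz', hw', hip]
        exact pairGraph_adj (fan_adj_inl.mpr hadj)
      · rw [if_neg c1, if_neg c2, Prod.mk.injEq] at heq
        have hip : i = p := Fin.ext heq.1
        have hjq : j = q := Fin.ext (by omega)
        rw [hz', hw', hip, hjq]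

/-! ### Fan: lower bound construction -/

def SF (m : ℕ) : Finset (Sym2 (Fin m ⊕ Unit)) :=
  (ETF m).image (fun p => Sym2.mk (Sum.inl p.1) (Sum.inl p.2)) ∪
    {Sym2.mk (Sum.inr ()) (Sum.inr ())}

lemma card_SF (m : ℕ) : (SF m).card = (ET m).card + 1 := by
  rw [SF, Finset.card_union_of_disjoint, Finset.card_singleton,
    Finset.card_image_of_injOn, card_ETF]
  · intro p hp q hq h
    simp only [Finset.mem_coe, mem_ETF] at hp hq
    rw [Sym2.eq_iff] at h
    rcases h with ⟨h1, h2⟩ | ⟨h1, h2⟩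
    · exact Prod.ext (Sum.inl_injective h1) (Sum.inl_injective h2)
    · have e1 : (p.1 : ℕ) = (q.2 : ℕ) := congrArg Fin.val (Sum.inl_injective h1)
      have e2 : (p.2 : ℕ) = (q.1 : ℕ) := congrArg Fin.val (Sum.inl_injective h2)
      have : (p.1 : ℕ) = (q.1 : ℕ) ∧ (p.2 : ℕ) = (q.2 : ℕ) := by omega
      exact Prod.ext (Fin.ext this.1) (Fin.ext this.2)
  · rw [Finset.disjoint_right]
    intro z hz1 hz2
    rw [Finset.mem_singleton] at hz1
    obtain ⟨p, -, hp⟩ := Finset.mem_image.mp hz2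
    rw [hz1, Sym2.eq_iff] at hp
    rcases hp with ⟨h1, -⟩ | ⟨h1, -⟩ <;> exact absurd h1 (by simp)

lemma SF_parts {m : ℕ} {z : Sym2 (Fin m ⊕ Unit)}
    (hz : z ∈ (ETF m).image (fun p => Sym2.mk (Sum.inl p.1) (Sum.inl p.2)))
    {a x : Fin m ⊕ Unit} (h : z = Sym2.mk a x) :
    ∃ i j : Fin m, a = Sum.inl i ∧ x = Sum.inl j ∧ (i : ℕ) % 2 = (j : ℕ) % 2 := by
  obtain ⟨p, hp, rfl⟩ := Finset.mem_image.mp hz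
  rw [mem_ETF] at hp
  rw [Sym2.eq_iff] at h
  rcases h with ⟨h1, h2⟩ | ⟨h1, h2⟩
  · exact ⟨p.1, p.2, h1.symm, h2.symm, hp.2⟩
  · exact ⟨p.2, p.1, h2.symm, h1.symm, hp.2.symm⟩

lemma SF_indep {m : ℕ} : ∀ a ∈ SF m, ∀ b ∈ SF m, ¬ (pairGraph (fanG m)).Adj a b := by
  intro z hz w hw hadj
  obtain ⟨a, x, y, hxy, h1, h2⟩ := pairGraph_adj_elim hadj
  rcases Finset.mem_union.mp hz with hz' | hz' <;>
    rcases Finset.mem_union.mp hw with hw' | hw'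
  · obtain ⟨i, j, ha, hx, hij⟩ := SF_parts hz' h1
    obtain ⟨i', j', ha', hy, hij'⟩ := SF_parts hw' h2
    have hii : (Sum.inl i : Fin m ⊕ Unit) = Sum.inl i' := by rw [← ha, ← ha']
    have : i = i' := Sum.inl_injective hii
    subst this
    rw [hx, hy, fan_adj_inl, path_adj] at hxy
    omega
  · obtain ⟨i, j, ha, hx, hij⟩ := SF_parts hz' h1
    rw [Finset.mem_singleton] at hw'
    rw [hw', Sym2.eq_iff] at h2
    rcases h2 with ⟨e1, -⟩ | ⟨-, e1⟩ <;> rw [ha] at e1 <;> exact absurd e1 (by simp)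
  · rw [Finset.mem_singleton] at hz'
    obtain ⟨i, j, ha, hy, hij⟩ := SF_parts hw' h2
    rw [hz', Sym2.eq_iff] at h1
    rcases h1 with ⟨e1, -⟩ | ⟨-, e1⟩ <;> rw [ha] at e1 <;> exact absurd e1 (by simp)
  · rw [Finset.mem_singleton] at hz' hw'
    rw [hz', Sym2.eq_iff] at h1
    rw [hw', Sym2.eq_iff] at h2
    have hx : x = Sum.inr () := by tauto
    have hy : y = Sum.inr () := by tauto
    rw [hx, hy] at hxy
    exact fan_not_adj_hub_hub hxy

lemma indepNum_fan (m : ℕ) : indepNum (pairGraph (fanG m)) = (m + 1) ^ 2 / 4 + 1 := by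
  apply indepNum_eq
  · exact ⟨SF m, by rw [card_SF, card_ET'], SF_indep⟩
  · intro s hs
    rw [← card_ET' m]
    exact indep_card_le_fan s hs

end FanPairProof

/-- For every `m ≥ 1`, `α(C(F_{m,1})) = α(C(P_m)) + 1`; equivalently, for `m ≥ 3`,
`α(C(F_{m,1})) = ⌊(m+1)²/4⌋ + 1`. -/
theorem indepNum_pairGraph_fan :
    (∀ m : ℕ, 1 ≤ m →
      indepNum (pairGraph (fanG m)) = indepNum (pairGraph (pathG m)) + 1) ∧
    (∀ m : ℕ, 3 ≤ m →
      indepNum (pairGraph (fanG m)) = (m + 1) ^ 2 / 4 + 1) := by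
  constructor
  · intro m _
    rw [FanPairProof.indepNum_fan, FanPairProof.indepNum_path]
  · intro m _
    exact FanPairProof.indepNum_fan m
end

section
/- For every integer m ≥ 3, the independence number of the pair graph of the wheel graph W_{m,1} equals the independence number of the pair graph of the cycle C_m plus 1. -/
open Sum

lemma pairGraph_adj {V : Type*} {G : SimpleGraph V} {s t : Sym2 V} :
    (pairGraph G).Adj s t ↔ s ≠ t ∧ ∃ a x y : V, G.Adj x y ∧ s = s(a, x) ∧ t = s(a, y) := by
  simp only [pairGraph, SimpleGraph.fromRel_adj]
  constructor
  · rintro ⟨hne, h | ⟨a, x, y, hxy, ht, hs⟩⟩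
    · exact ⟨hne, h⟩
    · exact ⟨hne, a, y, x, hxy.symm, hs, ht⟩
  · rintro ⟨hne, h⟩
    exact ⟨hne, Or.inl h⟩

lemma joinK1_adj_inl {V : Type*} {G : SimpleGraph V} {x y : V} :
    (joinK1 G).Adj (inl x) (inl y) ↔ G.Adj x y := by
  simp only [joinK1, SimpleGraph.fromRel_adj]
  constructor
  · rintro ⟨hne, (⟨u,v,huv,hx,hy⟩|⟨-,h⟩)|(⟨u,v,huv,hx,hy⟩|⟨-,h⟩)⟩
    · cases hx; cases hy; exact huv
    · simp at h
    · cases hx; cases hy; exact huv.symm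
    · simp at h
  · intro h
    exact ⟨by simp [h.ne], Or.inl (Or.inl ⟨x, y, h, rfl, rfl⟩)⟩

lemma joinK1_adj_inl_inr {V : Type*} {G : SimpleGraph V} (x : V) (u : Unit) :
    (joinK1 G).Adj (inl x) (inr u) := by
  simp only [joinK1, SimpleGraph.fromRel_adj]
  exact ⟨by simp, Or.inl (Or.inr (by simp))⟩

def phi {V : Type*} (d : V) : Sym2 (V ⊕ Unit) → Sym2 V :=
  Sym2.lift ⟨fun a b =>
    match a, b with
    | inl x, inl y => s(x, y)
    | inl x, inr _ => s(x, x)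
    | inr _, inl y => s(y, y)
    | inr _, inr _ => s(d, d),
   by rintro (x|x) (y|y) <;> simp [Sym2.eq_swap]⟩

@[simp] lemma phi_ll {V : Type*} (d x y : V) : phi d s(inl x, inl y) = s(x, y) := rfl
@[simp] lemma phi_lr {V : Type*} (d x : V) (u : Unit) : phi d s(inl x, inr u) = s(x, x) := rfl
@[simp] lemma phi_rl {V : Type*} (d y : V) (u : Unit) : phi d s(inr u, inl y) = s(y, y) := rfl
@[simp] lemma phi_rr {V : Type*} (d : V) (u v : Unit) : phi d s(inr u, inr v) = s(d, d) := rfl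

lemma phi_eq_cases {V : Type*} (G : SimpleGraph V) (d : V) (s t : Sym2 (V ⊕ Unit))
    (h : phi d s = phi d t) :
    s = t ∨ (pairGraph (joinK1 G)).Adj s t ∨
      s = s(inr (), inr ()) ∨ t = s(inr (), inr ()) := by
  induction s using Sym2.ind with | _ a b =>
  induction t using Sym2.ind with | _ c e =>
  rcases a with x|u
  · rcases b with y|u
    · rcases c with z|w
      · rcases e with w|w
        · -- ll ll
          left
          simp only [phi_ll, Sym2.eq_iff] at h
          simp only [Sym2.eq_iff, inl.injEq]
          tauto
        · -- ll lr
          simp only [phi_ll, phi_lr, Sym2.eq_iff] at h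
          obtain ⟨h1, h2⟩ : x = z ∧ y = z := by tauto
          exact Or.inr (Or.inl (pairGraph_adj.mpr ⟨by simp [Sym2.eq_iff],
            inl z, inl z, inr w, joinK1_adj_inl_inr z w, by simp [Sym2.eq_iff, h1, h2], rfl⟩))
      · rcases e with z|w'
        · -- ll rl
          simp only [phi_ll, phi_rl, Sym2.eq_iff] at h
          obtain ⟨h1, h2⟩ : x = z ∧ y = z := by tauto
          exact Or.inr (Or.inl (pairGraph_adj.mpr ⟨by simp [Sym2.eq_iff],
            inl z, inl z, inr w, joinK1_adj_inl_inr z w, by simp [Sym2.eq_iff, h1, h2],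
            by simp [Sym2.eq_iff]⟩))
        · -- ll rr
          exact Or.inr (Or.inr (Or.inr rfl))
    · rcases c with z|w
      · rcases e with z'|w
        · -- lr ll
          simp only [phi_lr, phi_ll, Sym2.eq_iff] at h
          obtain ⟨h1, h2⟩ : z = x ∧ z' = x := by tauto
          exact Or.inr (Or.inl (pairGraph_adj.mpr ⟨by simp [Sym2.eq_iff],
            inl x, inr u, inl x, (joinK1_adj_inl_inr x u).symm, by simp [Sym2.eq_iff],
            by simp [Sym2.eq_iff, h1, h2]⟩))
        · -- lr lr
          simp only [phi_lr, Sym2.eq_iff] at h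
          obtain ⟨h1, -⟩ : x = z ∧ x = z := by tauto
          left; simp [Sym2.eq_iff, h1]
      · rcases e with z|w'
        · -- lr rl
          simp only [phi_lr, phi_rl, Sym2.eq_iff] at h
          obtain ⟨h1, -⟩ : x = z ∧ x = z := by tauto
          left; simp [Sym2.eq_iff, h1]
        · -- lr rr
          exact Or.inr (Or.inr (Or.inr rfl))
  · rcases b with y|v
    · rcases c with z|w
      · rcases e with z'|w
        · -- rl ll
          simp only [phi_rl, phi_ll, Sym2.eq_iff] at h
          obtain ⟨h1, h2⟩ : z = y ∧ z' = y := by tauto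
          exact Or.inr (Or.inl (pairGraph_adj.mpr ⟨by simp [Sym2.eq_iff],
            inl y, inr u, inl y, (joinK1_adj_inl_inr y u).symm, by simp [Sym2.eq_iff],
            by simp [Sym2.eq_iff, h1, h2]⟩))
        · -- rl lr
          simp only [phi_rl, phi_lr, Sym2.eq_iff] at h
          obtain ⟨h1, -⟩ : y = z ∧ y = z := by tauto
          left; simp [Sym2.eq_iff, h1]
      · rcases e with z|w'
        · -- rl rl
          simp only [phi_rl, Sym2.eq_iff] at h
          obtain ⟨h1, -⟩ : y = z ∧ y = z := by tauto
          left; simp [Sym2.eq_iff, h1]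
        · -- rl rr
          exact Or.inr (Or.inr (Or.inr rfl))
    · exact Or.inr (Or.inr (Or.inl rfl))

lemma mk_inl_eq {V : Type*} {p q r w : V} (h : s(p, q) = s(r, w)) :
    s(inl p, inl q) = (s(inl r, inl w) : Sym2 (V ⊕ Unit)) := by
  simpa using congrArg (Sym2.map (inl : V → V ⊕ Unit)) h

lemma phi_adj_cases {V : Type*} (G : SimpleGraph V) (d : V) (s t : Sym2 (V ⊕ Unit))
    (h : (pairGraph G).Adj (phi d s) (phi d t)) :
    (pairGraph (joinK1 G)).Adj s t ∨ s = s(inr (), inr ()) ∨ t = s(inr (), inr ()) := by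
  induction s using Sym2.ind with | _ a1 b1 =>
  induction t using Sym2.ind with | _ c1 e1 =>
  obtain ⟨hne, a, x, y, hxy, h1, h2⟩ := pairGraph_adj.mp h
  have hst : s(a1, b1) ≠ s(c1, e1) := fun hq => hne (by rw [hq])
  rcases a1 with x1|u1
  · rcases b1 with y1|u1
    · -- s = ll
      rcases c1 with z1|w1
      · rcases e1 with w1|w1
        · -- ll ll
          simp only [phi_ll] at h1 h2
          exact Or.inl (pairGraph_adj.mpr ⟨hst, inl a, inl x, inl y, joinK1_adj_inl.mpr hxy,
            mk_inl_eq h1, mk_inl_eq h2⟩)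
        · -- ll lr
          simp only [phi_ll, phi_lr] at h1 h2
          obtain ⟨h3, h4⟩ : z1 = a ∧ z1 = y := by have := Sym2.eq_iff.mp h2; tauto
          exact Or.inl (pairGraph_adj.mpr ⟨hst, inl a, inl x, inr w1, joinK1_adj_inl_inr x w1,
            mk_inl_eq h1, by simp [Sym2.eq_iff, h3]⟩)
      · rcases e1 with z1|w2
        · -- ll rl
          simp only [phi_ll, phi_rl] at h1 h2
          obtain ⟨h3, h4⟩ : z1 = a ∧ z1 = y := by have := Sym2.eq_iff.mp h2; tauto
          exact Or.inl (pairGraph_adj.mpr ⟨hst, inl a, inl x, inr w1, joinK1_adj_inl_inr x w1,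
            mk_inl_eq h1, by simp [Sym2.eq_iff, h3]⟩)
        · -- ll rr
          exact Or.inr (Or.inr rfl)
    · -- s = lr
      rcases c1 with z1|w1
      · rcases e1 with z2|w1
        · -- lr ll
          simp only [phi_lr, phi_ll] at h1 h2
          obtain ⟨h3, h4⟩ : x1 = a ∧ x1 = x := by have := Sym2.eq_iff.mp h1; tauto
          exact Or.inl (pairGraph_adj.mpr ⟨hst, inl a, inr u1, inl y,
            (joinK1_adj_inl_inr y u1).symm, by simp [Sym2.eq_iff, h3],
            mk_inl_eq h2⟩)
        · -- lr lr
          simp only [phi_lr] at h1 h2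
          obtain ⟨h3, h4⟩ : x1 = a ∧ x1 = x := by have := Sym2.eq_iff.mp h1; tauto
          obtain ⟨h5, h6⟩ : z1 = a ∧ z1 = y := by have := Sym2.eq_iff.mp h2; tauto
          have : x = y := by rw [← h4, h3, ← h5, h6]
          exact (hxy.ne this).elim
      · rcases e1 with z1|w2
        · -- lr rl
          simp only [phi_lr, phi_rl] at h1 h2
          obtain ⟨h3, h4⟩ : x1 = a ∧ x1 = x := by have := Sym2.eq_iff.mp h1; tauto
          obtain ⟨h5, h6⟩ : z1 = a ∧ z1 = y := by have := Sym2.eq_iff.mp h2; tauto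
          have : x = y := by rw [← h4, h3, ← h5, h6]
          exact (hxy.ne this).elim
        · -- lr rr
          exact Or.inr (Or.inr rfl)
  · rcases b1 with y1|v1
    · -- s = rl
      rcases c1 with z1|w1
      · rcases e1 with z2|w1
        · -- rl ll
          simp only [phi_rl, phi_ll] at h1 h2
          obtain ⟨h3, h4⟩ : y1 = a ∧ y1 = x := by have := Sym2.eq_iff.mp h1; tauto
          exact Or.inl (pairGraph_adj.mpr ⟨hst, inl a, inr u1, inl y,
            (joinK1_adj_inl_inr y u1).symm, by simp [Sym2.eq_iff, h3],
            mk_inl_eq h2⟩)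
        · -- rl lr
          simp only [phi_rl, phi_lr] at h1 h2
          obtain ⟨h3, h4⟩ : y1 = a ∧ y1 = x := by have := Sym2.eq_iff.mp h1; tauto
          obtain ⟨h5, h6⟩ : z1 = a ∧ z1 = y := by have := Sym2.eq_iff.mp h2; tauto
          have : x = y := by rw [← h4, h3, ← h5, h6]
          exact (hxy.ne this).elim
      · rcases e1 with z1|w2
        · -- rl rl
          simp only [phi_rl] at h1 h2
          obtain ⟨h3, h4⟩ : y1 = a ∧ y1 = x := by have := Sym2.eq_iff.mp h1; tauto
          obtain ⟨h5, h6⟩ : z1 = a ∧ z1 = y := by have := Sym2.eq_iff.mp h2; tauto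
          have : x = y := by rw [← h4, h3, ← h5, h6]
          exact (hxy.ne this).elim
        · -- rl rr
          exact Or.inr (Or.inr rfl)
    · -- s = rr
      exact Or.inr (Or.inl rfl)

lemma upper {V : Type*} (G : SimpleGraph V) (d : V) (T : Finset (Sym2 (V ⊕ Unit)))
    (hT : ∀ a ∈ T, ∀ b ∈ T, ¬ (pairGraph (joinK1 G)).Adj a b) :
    ∃ S : Finset (Sym2 V), T.card ≤ S.card + 1 ∧
      ∀ a ∈ S, ∀ b ∈ S, ¬ (pairGraph G).Adj a b := by
  classical
  set hh : Sym2 (V ⊕ Unit) := s(inr (), inr ()) with hhdef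
  refine ⟨(T.erase hh).image (phi d), ?_, ?_⟩
  · have hinj : Set.InjOn (phi d) (T.erase hh) := by
      intro s hs t ht hst
      have hs' := Finset.mem_coe.mp hs
      have ht' := Finset.mem_coe.mp ht
      rcases phi_eq_cases G d s t hst with h | h | h | h
      · exact h
      · exact absurd h (hT s (Finset.mem_of_mem_erase hs') t (Finset.mem_of_mem_erase ht'))
      · exact absurd h (Finset.ne_of_mem_erase hs')
      · exact absurd h (Finset.ne_of_mem_erase ht')
    rw [Finset.card_image_of_injOn hinj]
    by_cases hmem : hh ∈ T
    · rw [Finset.card_erase_of_mem hmem]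
      have : 0 < T.card := Finset.card_pos.mpr ⟨hh, hmem⟩
      omega
    · rw [Finset.erase_eq_of_notMem hmem]; omega
  · intro p hp q hq hadj
    obtain ⟨s, hs, rfl⟩ := Finset.mem_image.mp hp
    obtain ⟨t, ht, rfl⟩ := Finset.mem_image.mp hq
    rcases phi_adj_cases G d s t hadj with h | h | h
    · exact hT s (Finset.mem_of_mem_erase hs) t (Finset.mem_of_mem_erase ht) h
    · exact Finset.ne_of_mem_erase hs h
    · exact Finset.ne_of_mem_erase ht h

lemma lower {V : Type*} (G : SimpleGraph V) (S : Finset (Sym2 V))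
    (hS : ∀ a ∈ S, ∀ b ∈ S, ¬ (pairGraph G).Adj a b) :
    ∃ T : Finset (Sym2 (V ⊕ Unit)), T.card = S.card + 1 ∧
      ∀ a ∈ T, ∀ b ∈ T, ¬ (pairGraph (joinK1 G)).Adj a b := by
  classical
  set hh : Sym2 (V ⊕ Unit) := s(inr (), inr ()) with hhdef
  have hnotmem : hh ∉ S.image (Sym2.map (inl : V → V ⊕ Unit)) := by
    rw [Finset.mem_image]
    rintro ⟨p, hp, hmap⟩
    induction p using Sym2.ind with | _ a b =>
    rw [Sym2.map_pair_eq] at hmap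
    simp [hhdef, Sym2.eq_iff] at hmap
  refine ⟨insert hh (S.image (Sym2.map inl)), ?_, ?_⟩
  · rw [Finset.card_insert_of_notMem hnotmem,
      Finset.card_image_of_injective _ (Sym2.map.injective inl_injective)]
  · have hub : ∀ p : Sym2 V, ¬ (pairGraph (joinK1 G)).Adj hh (Sym2.map inl p) := by
      intro p hadj
      induction p using Sym2.ind with | _ c e =>
      obtain ⟨hne, a, x, y, hxy, h1, h2⟩ := pairGraph_adj.mp hadj
      rw [Sym2.map_pair_eq] at h2
      obtain ⟨ha, -⟩ : a = inr () ∧ x = inr () := by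
        have := Sym2.eq_iff.mp h1; tauto
      rcases Sym2.eq_iff.mp h2 with ⟨h3, -⟩ | ⟨-, h3⟩ <;> simp [ha] at h3
    intro p hp q hq hadj
    rcases Finset.mem_insert.mp hp with rfl | hp'
    · rcases Finset.mem_insert.mp hq with rfl | hq'
      · exact (pairGraph (joinK1 G)).irrefl hadj
      · obtain ⟨p, hpS, rfl⟩ := Finset.mem_image.mp hq'
        exact hub p hadj
    · obtain ⟨p', hpS, rfl⟩ := Finset.mem_image.mp hp'
      rcases Finset.mem_insert.mp hq with rfl | hq'
      · exact hub p' hadj.symm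
      · obtain ⟨q', hqS, rfl⟩ := Finset.mem_image.mp hq'
        induction p' using Sym2.ind with | _ c1 e1 =>
        induction q' using Sym2.ind with | _ c2 e2 =>
        obtain ⟨hne, a, x, y, hxy, h1, h2⟩ := pairGraph_adj.mp hadj
        simp only [Sym2.map_pair_eq] at h1 h2 hne
        have hne' : s(c1, e1) ≠ s(c2, e2) := fun hq => hne (mk_inl_eq hq)
        rcases Sym2.eq_iff.mp h1 with ⟨ha, hx⟩ | ⟨hx, ha⟩ <;>
          rcases Sym2.eq_iff.mp h2 with ⟨ha2, hy⟩ | ⟨hy, ha2⟩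
        · have hc : c2 = c1 := by injection ha2.trans ha.symm
          rw [← hx, ← hy] at hxy
          exact hS _ hpS _ hqS (pairGraph_adj.mpr ⟨hne', c1, e1, e2,
            joinK1_adj_inl.mp hxy, rfl, by simp [Sym2.eq_iff, hc]⟩)
        · have hc : e2 = c1 := by injection ha2.trans ha.symm
          rw [← hx, ← hy] at hxy
          exact hS _ hpS _ hqS (pairGraph_adj.mpr ⟨hne', c1, e1, c2,
            joinK1_adj_inl.mp hxy, rfl, by simp [Sym2.eq_iff, hc]⟩)
        · have hc : c2 = e1 := by injection ha2.trans ha.symm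
          rw [← hx, ← hy] at hxy
          exact hS _ hpS _ hqS (pairGraph_adj.mpr ⟨hne', e1, c1, e2,
            joinK1_adj_inl.mp hxy, by simp [Sym2.eq_iff], by simp [Sym2.eq_iff, hc]⟩)
        · have hc : e2 = e1 := by injection ha2.trans ha.symm
          rw [← hx, ← hy] at hxy
          exact hS _ hpS _ hqS (pairGraph_adj.mpr ⟨hne', e1, c1, c2,
            joinK1_adj_inl.mp hxy, by simp [Sym2.eq_iff], by simp [Sym2.eq_iff, hc]⟩)


/-- For every integer `m ≥ 3`, `α(C(W_{m,1})) = α(C(C_m)) + 1`. -/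
theorem indepNum_pairGraph_wheel (m : ℕ) (hm : 3 ≤ m) :
    indepNum (pairGraph (wheelG m)) = indepNum (pairGraph (cycleG m)) + 1 := by
  classical
  have d : Fin m := ⟨0, by omega⟩
  set A := {n | ∃ s : Finset (Sym2 (Fin m ⊕ Unit)), s.card = n ∧
      ∀ a ∈ s, ∀ b ∈ s, ¬ (pairGraph (wheelG m)).Adj a b} with hA
  set B := {n | ∃ s : Finset (Sym2 (Fin m)), s.card = n ∧
      ∀ a ∈ s, ∀ b ∈ s, ¬ (pairGraph (cycleG m)).Adj a b} with hB
  have bddA : BddAbove A := ⟨Fintype.card (Sym2 (Fin m ⊕ Unit)), by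
    rintro n ⟨s, rfl, -⟩; exact s.card_le_univ⟩
  have bddB : BddAbove B := ⟨Fintype.card (Sym2 (Fin m)), by
    rintro n ⟨s, rfl, -⟩; exact s.card_le_univ⟩
  have neA : A.Nonempty := ⟨0, ∅, rfl, by simp⟩
  have neB : B.Nonempty := ⟨0, ∅, rfl, by simp⟩
  have eA : indepNum (pairGraph (wheelG m)) = sSup A := rfl
  have eB : indepNum (pairGraph (cycleG m)) = sSup B := rfl
  rw [eA, eB]
  apply le_antisymm
  · refine csSup_le neA ?_
    rintro n ⟨T, rfl, hT⟩
    obtain ⟨S, hcard, hind⟩ := upper (cycleG m) d T hT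
    have : S.card ≤ sSup B := le_csSup bddB ⟨S, rfl, hind⟩
    omega
  · obtain ⟨S, hSc, hSi⟩ := Nat.sSup_mem neB bddB
    obtain ⟨T, hTc, hTi⟩ := lower (cycleG m) S hSi
    have : T.card ≤ sSup A := le_csSup bddA ⟨T, rfl, hTi⟩
    omega
end

section
/- For every integer m ≥ 2, the independence number of the double vertex graph of the path P_m equals ⌊m²/4⌋. -/
namespace DVGaux
variable {m : ℕ}

abbrev Vtx (m : ℕ) := {A : Finset (Fin m) // A.card = 2}

def mixed (A : Finset (Fin m)) : Prop := (∑ x ∈ A, (x : ℕ)) % 2 = 1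

instance : DecidablePred (mixed (m := m)) := fun A => by unfold mixed; infer_instance

lemma sum_parity_symmDiff (A B : Finset (Fin m)) :
    ((∑ x ∈ symmDiff A B, (x : ℕ)) + ((∑ x ∈ A, (x : ℕ)) + ∑ x ∈ B, (x : ℕ))) % 2 = 0 := by
  have h1 : symmDiff A B = (A ∪ B) \ (A ∩ B) := by rw [symmDiff_eq_sup_sdiff_inf]; rfl
  have h2 : (∑ x ∈ (A ∪ B) \ (A ∩ B), (x : ℕ)) + ∑ x ∈ A ∩ B, (x : ℕ)
      = ∑ x ∈ A ∪ B, (x : ℕ) :=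
    Finset.sum_sdiff Finset.inter_subset_union
  have h3 : (∑ x ∈ A ∪ B, (x : ℕ)) + ∑ x ∈ A ∩ B, (x : ℕ)
      = (∑ x ∈ A, (x : ℕ)) + ∑ x ∈ B, (x : ℕ) := Finset.sum_union_inter
  rw [h1]
  omega

lemma no_edge (A B : Finset (Fin m)) (hA : mixed A) (hB : mixed B) (a b : Fin m)
    (hne : a ≠ b) (hab : (a : ℕ) + 1 = b ∨ (b : ℕ) + 1 = a)
    (hsd : symmDiff A B = {a, b}) : False := by
  have h := sum_parity_symmDiff A B
  rw [hsd, Finset.sum_pair hne] at h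
  unfold mixed at hA hB
  omega

lemma not_adj_of_mixed (A B : Vtx m) (hA : mixed A.1) (hB : mixed B.1) :
    ¬ (doubleVertexGraph (pathG m)).Adj A B := by
  intro h
  rw [doubleVertexGraph, tokenGraph, SimpleGraph.fromRel_adj] at h
  obtain ⟨hne, h | h⟩ := h <;> obtain ⟨a, b, hab, hsd⟩ := h <;>
    rw [pathG, SimpleGraph.fromRel_adj] at hab
  · exact no_edge A.1 B.1 hA hB a b hab.1 hab.2 hsd
  · exact no_edge B.1 A.1 hB hA a b hab.1 hab.2 hsd

def T (m : ℕ) : Finset (Vtx m) := Finset.univ.filter (fun A => mixed A.1)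

lemma arith (m : ℕ) : (m + 1) / 2 * (m / 2) = m ^ 2 / 4 := by
  rcases Nat.even_or_odd m with ⟨q, rfl⟩ | ⟨q, rfl⟩
  · have h1 : (q + q + 1) / 2 = q := by omega
    have h2 : (q + q) / 2 = q := by omega
    have h3 : (q + q) ^ 2 = 4 * (q * q) := by ring
    rw [h1, h2, h3, Nat.mul_div_cancel_left _ (by norm_num)]
  · have h1 : (2 * q + 1 + 1) / 2 = q + 1 := by omega
    have h2 : (2 * q + 1) / 2 = q := by omega
    have h3 : (2 * q + 1) ^ 2 = 4 * (q * (q + 1)) + 1 := by ring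
    rw [h1, h2, h3, Nat.mul_add_div (by norm_num)]
    have h4 : (1 : ℕ) / 4 = 0 := by norm_num
    rw [h4, add_zero, Nat.mul_comm]

lemma b1 (p : Fin ((m + 1) / 2) × Fin (m / 2)) : 2 * p.1.1 < m := by
  have := p.1.isLt; have := p.2.isLt; omega

lemma b2 (p : Fin ((m + 1) / 2) × Fin (m / 2)) : 2 * p.2.1 + 1 < m := by
  have := p.2.isLt; omega

lemma embne (p : Fin ((m + 1) / 2) × Fin (m / 2)) :
    Fin.mk (2 * p.1.1) (b1 p) ≠ Fin.mk (2 * p.2.1 + 1) (b2 p) :=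
  Fin.ne_of_val_ne (by simp; omega)

def emb (p : Fin ((m + 1) / 2) × Fin (m / 2)) : Vtx m :=
  ⟨{Fin.mk (2 * p.1.1) (b1 p), Fin.mk (2 * p.2.1 + 1) (b2 p)},
    by rw [Finset.card_pair (embne p)]⟩

lemma card_T (m : ℕ) : (T m).card = m ^ 2 / 4 := by
  have key : (Finset.univ : Finset (Fin ((m + 1) / 2) × Fin (m / 2))).card = (T m).card := by
    apply Finset.card_nbij emb
    · intro p _
      simp only [T, Finset.mem_coe, Finset.mem_filter, Finset.mem_univ, true_and]
      unfold mixed emb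
      rw [Finset.sum_pair (embne p)]
      simp only [Fin.val_mk]
      omega
    · intro p _ q _ h
      simp only [emb, Subtype.mk_eq_mk] at h
      have h1 : Fin.mk (2 * p.1.1) (b1 p) ∈
          ({Fin.mk (2 * q.1.1) (b1 q), Fin.mk (2 * q.2.1 + 1) (b2 q)} : Finset (Fin m)) := by
        rw [← h]; simp
      have h2 : Fin.mk (2 * p.2.1 + 1) (b2 p) ∈
          ({Fin.mk (2 * q.1.1) (b1 q), Fin.mk (2 * q.2.1 + 1) (b2 q)} : Finset (Fin m)) := by
        rw [← h]; simp
      simp only [Finset.mem_insert, Finset.mem_singleton, Fin.mk.injEq] at h1 h2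
      have e1 : p.1.1 = q.1.1 := by omega
      have e2 : p.2.1 = q.2.1 := by omega
      exact Prod.ext (Fin.ext e1) (Fin.ext e2)
    · intro B hB
      simp only [T, Finset.coe_filter, Finset.mem_univ, true_and, Set.mem_setOf_eq] at hB
      obtain ⟨a, b, hab, hAB⟩ := Finset.card_eq_two.mp B.2
      unfold mixed at hB
      rw [hAB, Finset.sum_pair hab] at hB
      have hva := a.isLt
      have hvb := b.isLt
      rcases Nat.even_or_odd (a : ℕ) with he | ho
      · have hae : (a : ℕ) % 2 = 0 := Nat.even_iff.mp he
        refine ⟨(⟨(a : ℕ) / 2, by omega⟩, ⟨(b : ℕ) / 2, by omega⟩), by simp, ?_⟩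
        apply Subtype.ext
        rw [hAB]
        unfold emb
        exact congrArg₂ (fun x y => ({x, y} : Finset (Fin m))) (Fin.ext (by simp; omega)) (Fin.ext (by simp; omega))
      · have hae : (a : ℕ) % 2 = 1 := Nat.odd_iff.mp ho
        refine ⟨(⟨(b : ℕ) / 2, by omega⟩, ⟨(a : ℕ) / 2, by omega⟩), by simp, ?_⟩
        apply Subtype.ext
        rw [hAB, Finset.pair_comm]
        unfold emb
        exact congrArg₂ (fun x y => ({x, y} : Finset (Fin m))) (Fin.ext (by simp; omega)) (Fin.ext (by simp; omega))
  rw [← key]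
  simp [arith]

lemma vne (A : Vtx m) : A.1.Nonempty := Finset.card_pos.mp (by rw [A.2]; norm_num)

def lo (A : Vtx m) : Fin m := A.1.min' (vne A)
def hi (A : Vtx m) : Fin m := A.1.max' (vne A)

lemma lo_lt_hi (A : Vtx m) : lo A < hi A :=
  Finset.min'_lt_max'_of_card _ (by rw [A.2]; norm_num)

lemma eq_pair (A : Vtx m) : A.1 = {lo A, hi A} := by
  refine (Finset.eq_of_subset_of_card_le ?_ ?_).symm
  · intro x hx
    simp only [Finset.mem_insert, Finset.mem_singleton] at hx
    rcases hx with rfl | rfl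
    · exact A.1.min'_mem (vne A)
    · exact A.1.max'_mem (vne A)
  · rw [A.2, Finset.card_pair (ne_of_lt (lo_lt_hi A))]

lemma sum_eq (A : Vtx m) : (∑ x ∈ A.1, (x : ℕ)) = (lo A : ℕ) + (hi A : ℕ) := by
  rw [show A.1 = {lo A, hi A} from eq_pair A,
    Finset.sum_pair (ne_of_lt (lo_lt_hi A))]

lemma lo_add (A : Vtx m) (h : ¬ mixed A.1) : (lo A : ℕ) + 1 < (hi A : ℕ) := by
  unfold mixed at h
  rw [sum_eq A] at h
  have := lo_lt_hi A
  rw [Fin.lt_def] at this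
  omega

def shiftF (A : Vtx m) (h : ¬ mixed A.1) : Vtx m :=
  ⟨{Fin.mk ((lo A : ℕ) + 1) (lt_trans (lo_add A h) (hi A).isLt), hi A},
    by rw [Finset.card_pair (Fin.ne_of_val_ne (by have := lo_add A h; simp; omega))]⟩

lemma mixed_shiftF (A : Vtx m) (h : ¬ mixed A.1) : mixed (shiftF A h).1 := by
  have hlt := lo_add A h
  unfold mixed at h ⊢
  rw [sum_eq A] at h
  unfold shiftF
  rw [Finset.sum_pair (Fin.ne_of_val_ne (by simp; omega))]
  simp only [Fin.val_mk]
  omega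

lemma pair_symmDiff {α : Type*} [DecidableEq α] {a b c : α} (hab : a ≠ b) (hac : a ≠ c)
    (hbc : b ≠ c) : symmDiff ({a, c} : Finset α) {b, c} = {a, b} := by
  ext x
  simp only [Finset.mem_symmDiff, Finset.mem_insert, Finset.mem_singleton]
  by_cases h1 : x = a <;> by_cases h2 : x = b <;> by_cases h3 : x = c <;> simp_all

lemma adj_shiftF (A : Vtx m) (h : ¬ mixed A.1) :
    (doubleVertexGraph (pathG m)).Adj A (shiftF A h) := by
  have hlt := lo_add A h
  rw [doubleVertexGraph, tokenGraph, SimpleGraph.fromRel_adj]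
  constructor
  · intro he
    exact h (by rw [he]; exact mixed_shiftF A h)
  · left
    refine ⟨lo A, Fin.mk ((lo A : ℕ) + 1) (lt_trans hlt (hi A).isLt), ?_, ?_⟩
    · rw [pathG, SimpleGraph.fromRel_adj]
      exact ⟨Fin.ne_of_val_ne (by simp), Or.inl (by simp)⟩
    · rw [show A.1 = {lo A, hi A} from eq_pair A]
      show symmDiff ({lo A, hi A} : Finset (Fin m)) {_, hi A} = _
      exact pair_symmDiff (Fin.ne_of_val_ne (by simp))
        (Fin.ne_of_val_ne (by simp; omega)) (Fin.ne_of_val_ne (by simp; omega))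

lemma finset_pair_eq {α : Type*} [DecidableEq α] {a b c d : α}
    (h : ({a, b} : Finset α) = {c, d}) : (a = c ∧ b = d) ∨ (a = d ∧ b = c) := by
  rw [← Finset.coe_inj] at h
  simp only [Finset.coe_insert, Finset.coe_singleton] at h
  exact Set.pair_eq_pair_iff.mp h

lemma shiftF_inj (A B : Vtx m) (hA : ¬ mixed A.1) (hB : ¬ mixed B.1)
    (h : shiftF A hA = shiftF B hB) : A = B := by
  have hlA := lo_add A hA
  have hlB := lo_add B hB
  have h' := Subtype.ext_iff.mp h
  unfold shiftF at h'
  simp only at h'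
  rcases finset_pair_eq h' with ⟨h1, h2⟩ | ⟨h1, h2⟩
  · have e1 : (lo A : ℕ) = (lo B : ℕ) := by
      have := Fin.val_eq_of_eq h1
      simpa using this
    apply Subtype.ext
    rw [eq_pair A, eq_pair B, Fin.ext e1, h2]
  · exfalso
    have e1 : (lo A : ℕ) + 1 = (hi B : ℕ) := by
      have := Fin.val_eq_of_eq h1
      simpa using this
    have e2 : (hi A : ℕ) = (lo B : ℕ) + 1 := by
      have := Fin.val_eq_of_eq h2
      simpa using this
    omega

end DVGaux

/-- For every integer `m ≥ 2`, the independence number of the double vertex graph of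
the path `P_m` equals `⌊m²/4⌋`. -/
theorem indepNum_doubleVertexGraph_path (m : ℕ) (hm : 2 ≤ m) :
    indepNum (doubleVertexGraph (pathG m)) = m ^ 2 / 4 := by
  unfold indepNum
  apply IsGreatest.csSup_eq
  constructor
  · refine ⟨DVGaux.T m, DVGaux.card_T m, ?_⟩
    intro a ha b hb
    simp only [DVGaux.T, Finset.mem_filter] at ha hb
    exact DVGaux.not_adj_of_mixed a b ha.2 hb.2
  · rintro n ⟨s, rfl, hs⟩
    rw [← DVGaux.card_T m]
    classical
    apply Finset.card_le_card_of_injOn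
      (fun A => if h : DVGaux.mixed A.1 then A else DVGaux.shiftF A h)
    · intro A hA
      simp only [DVGaux.T, Finset.mem_coe, Finset.mem_filter, Finset.mem_univ, true_and]
      split
      · assumption
      · exact DVGaux.mixed_shiftF A _
    · intro A hA B hB hEq
      simp only at hEq
      by_cases hmA : DVGaux.mixed A.1 <;> by_cases hmB : DVGaux.mixed B.1
      · simpa [hmA, hmB] using hEq
      · exfalso
        rw [dif_pos hmA, dif_neg hmB] at hEq
        exact hs B hB A hA (by rw [hEq]; exact DVGaux.adj_shiftF B hmB)
      · exfalso
        rw [dif_neg hmA, dif_pos hmB] at hEq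
        exact hs A hA B hB (by rw [← hEq]; exact DVGaux.adj_shiftF A hmA)
      · rw [dif_neg hmA, dif_neg hmB] at hEq
        exact DVGaux.shiftF_inj A B hmA hmB hEq
end

section
/- Let m ≥ 2 and let T_{m+1} denote the pair graph C(P_m) of the path P_m (isomorphic to the double vertex graph of P_{m+1}). For i ∈ {1,…,m}, let R_i = {{i,j} : j ∈ {1,…,m}} (2-multisets containing i). Then α(T_{m+1} − R_i) ≤ ⌊m²/4⌋ + 1 for every i. -/


def F0 (m i x y : ℕ) : ℕ :=
  if y < i then (y+1)^2/4 + x/2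
  else if i < x then (i+1)^2/4 + ((y-i)^2/4 + (x-i-1)/2)
  else if y - i - 1 < 2*((m-1-i)/2) then
    (i+1)^2/4 + (m-i)^2/4 + (((y-i-1)/2)*i + x)
  else (i+1)^2/4 + (m-i)^2/4 + (((m-1-i)/2)*i + x/2)

lemma qmono {u v : ℕ} (h : u ≤ v) : u^2/4 ≤ v^2/4 :=
  Nat.div_le_div_right (Nat.pow_le_pow_left h 2)

lemma qgap (n : ℕ) : (n+1)^2/4 + n/2 + 1 = (n+2)^2/4 := by
  rcases Nat.even_or_odd n with ⟨c, rfl⟩ | ⟨c, rfl⟩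
  · have h1 : (c+c+1)^2 = 4*(c*c+c)+1 := by ring
    have h2 : (c+c+2)^2 = 4*(c*c+2*c+1) := by ring
    omega
  · have h1 : (2*c+1+1)^2 = 4*(c*c+2*c+1) := by ring
    have h2 : (2*c+1+2)^2 = 4*(c*c+3*c+2)+1 := by ring
    omega

lemma qslack {y y' : ℕ} (h : y < y') : (y+1)^2/4 + y/2 < (y'+1)^2/4 := by
  have h1 := qgap y
  have h2 : (y+2)^2/4 ≤ (y'+1)^2/4 := qmono (by omega)
  omega

lemma boundA {i x y : ℕ} (hxy : x ≤ y) (h : y < i) : (y+1)^2/4 + x/2 < (i+1)^2/4 := by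
  have h1 : y < i := h
  have := qslack h1
  omega

lemma boundC {m i x y : ℕ} (hix : i < x) (hxy : x ≤ y) (hym : y < m) :
    (y-i)^2/4 + (x-i-1)/2 < (m-i)^2/4 := by
  obtain ⟨v, hv⟩ : ∃ v, y - i = v + 1 := ⟨y-i-1, by omega⟩
  obtain ⟨w, hw⟩ : ∃ w, m - i = w + 1 := ⟨m-i-1, by omega⟩
  rw [hv, hw]
  have h1 := qslack (show v < w by omega)
  omega

lemma injA {x y x' y' : ℕ} (hxy : x ≤ y) (hxy' : x' ≤ y')
    (hF : (y+1)^2/4 + x/2 = (y'+1)^2/4 + x'/2) (hne : ¬(x = x' ∧ y = y')) :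
    y = y' ∧ (x + 1 = x' ∨ x' + 1 = x) := by
  rcases Nat.lt_trichotomy y y' with h|h|h
  · have := qslack h; omega
  · subst h
    refine ⟨rfl, ?_⟩
    omega
  · have := qslack h; omega

lemma unique_div (a k x k' x' : ℕ) (hx : x < a) (hx' : x' < a)
    (h : k*a + x = k'*a + x') : k = k' ∧ x = x' := by
  have t1 : (x + k*a) % a = x := by rw [Nat.add_mul_mod_self_right, Nat.mod_eq_of_lt hx]
  have t2 : (x' + k'*a) % a = x' := by rw [Nat.add_mul_mod_self_right, Nat.mod_eq_of_lt hx']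
  have he : x + k*a = x' + k'*a := by omega
  rw [he] at t1
  have hxx : x = x' := by omega
  subst hxx
  have hk : k*a = k'*a := by omega
  exact ⟨Nat.eq_of_mul_eq_mul_right (by omega) hk, rfl⟩

lemma core (m i x y x' y' : ℕ) (him : i < m)
    (hxy : x ≤ y) (hym : y < m) (hxi : x ≠ i) (hyi : y ≠ i)
    (hxy' : x' ≤ y') (hym' : y' < m) (hxi' : x' ≠ i) (hyi' : y' ≠ i)
    (hne : ¬(x = x' ∧ y = y'))
    (hF : F0 m i x y = F0 m i x' y') :
    (x = x' ∧ (y + 1 = y' ∨ y' + 1 = y)) ∨ (y = y' ∧ (x + 1 = x' ∨ x' + 1 = x)) := by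
  unfold F0 at hF
  by_cases h1 : y < i
  · rw [if_pos h1] at hF
    by_cases h1' : y' < i
    · rw [if_pos h1'] at hF
      have := injA hxy hxy' hF hne
      omega
    · rw [if_neg h1'] at hF
      exfalso
      have b1 := boundA hxy h1
      by_cases h2' : i < x'
      · rw [if_pos h2'] at hF
        omega
      · rw [if_neg h2'] at hF
        by_cases h3' : y' - i - 1 < 2*((m-1-i)/2)
        · rw [if_pos h3'] at hF; omega
        · rw [if_neg h3'] at hF; omega
  · rw [if_neg h1] at hF
    by_cases h2 : i < x
    · rw [if_pos h2] at hF
      by_cases h1' : y' < i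
      · rw [if_pos h1'] at hF
        exfalso
        have b1 := boundA hxy' h1'
        omega
      · rw [if_neg h1'] at hF
        by_cases h2' : i < x'
        · rw [if_pos h2'] at hF
          -- both in C
          have hF2 : (y-i-1+1)^2/4 + (x-i-1)/2 = (y'-i-1+1)^2/4 + (x'-i-1)/2 := by
            rw [show y-i-1+1 = y-i by omega, show y'-i-1+1 = y'-i by omega]
            omega
          have hc := injA (show x-i-1 ≤ y-i-1 by omega) (show x'-i-1 ≤ y'-i-1 by omega)
            hF2 (by omega)
          omega
        · rw [if_neg h2'] at hF
          exfalso
          have b1 := boundC h2 hxy hym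
          by_cases h3' : y' - i - 1 < 2*((m-1-i)/2)
          · rw [if_pos h3'] at hF; omega
          · rw [if_neg h3'] at hF; omega
    · rw [if_neg h2] at hF
      -- point 1 in B : x < i < y
      have hx_lt : x < i := by omega
      have hy_gt : i < y := by omega
      by_cases h1' : y' < i
      · rw [if_pos h1'] at hF
        exfalso
        have b1 := boundA hxy' h1'
        by_cases h3 : y - i - 1 < 2*((m-1-i)/2)
        · rw [if_pos h3] at hF; omega
        · rw [if_neg h3] at hF; omega
      · rw [if_neg h1'] at hF
        by_cases h2' : i < x'
        · rw [if_pos h2'] at hF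
          exfalso
          have b1 := boundC h2' hxy' hym'
          by_cases h3 : y - i - 1 < 2*((m-1-i)/2)
          · rw [if_pos h3] at hF; omega
          · rw [if_neg h3] at hF; omega
        · rw [if_neg h2'] at hF
          -- both in B
          have hx_lt' : x' < i := by omega
          have hy_gt' : i < y' := by omega
          by_cases h3 : y - i - 1 < 2*((m-1-i)/2)
          · rw [if_pos h3] at hF
            by_cases h3' : y' - i - 1 < 2*((m-1-i)/2)
            · rw [if_pos h3'] at hF
              -- both main columns
              have hF2 : ((y-i-1)/2)*i + x = ((y'-i-1)/2)*i + x' := by omega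
              have := unique_div i ((y-i-1)/2) x ((y'-i-1)/2) x' hx_lt hx_lt' hF2
              omega
            · rw [if_neg h3'] at hF
              exfalso
              -- main value < leftover value
              have k1 : ((y-i-1)/2 + 1) * i ≤ ((m-1-i)/2)*i :=
                Nat.mul_le_mul_right i (by omega)
              have k2 : ((y-i-1)/2 + 1) * i = ((y-i-1)/2)*i + i := by ring
              omega
          · rw [if_neg h3] at hF
            by_cases h3' : y' - i - 1 < 2*((m-1-i)/2)
            · rw [if_pos h3'] at hF
              exfalso
              have k1 : ((y'-i-1)/2 + 1) * i ≤ ((m-1-i)/2)*i :=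
                Nat.mul_le_mul_right i (by omega)
              have k2 : ((y'-i-1)/2 + 1) * i = ((y'-i-1)/2)*i + i := by ring
              omega
            · rw [if_neg h3'] at hF
              -- both leftover column: forces y = y' = m-1 (b odd), x/2 = x'/2
              omega

lemma F0_le (m i x y : ℕ) (him : i < m) (hxy : x ≤ y) (hym : y < m)
    (hxi : x ≠ i) (hyi : y ≠ i) : F0 m i x y ≤ m^2/4 := by
  obtain ⟨c, hc⟩ : ∃ c, m^2 = 4*c ∨ m^2 = 4*c+1 := by
    rcases Nat.even_or_odd m with ⟨d, rfl⟩ | ⟨d, rfl⟩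
    · exact ⟨d*d, Or.inl (by ring)⟩
    · exact ⟨d*d+d, Or.inr (by ring)⟩
  unfold F0
  split_ifs with h1 h2 h3
  · have b1 := boundA hxy h1
    have b2 : (i+1)^2/4 ≤ m^2/4 := qmono (by omega)
    omega
  · have b1 := boundC h2 hxy hym
    have key : (i+1)^2 + (m-i)^2 ≤ m^2 + 1 := by
      obtain ⟨b, rfl⟩ : ∃ b, m = i + b + 1 := ⟨m-i-1, by omega⟩
      rw [show i+b+1-i = b+1 by omega]
      nlinarith [Nat.zero_le (i*b)]
    omega
  · -- B main
    have hx_lt : x < i := by omega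
    have hy_gt : i < y := by omega
    have k1 : ((y-i-1)/2 + 1) * i ≤ ((m-1-i)/2)*i := Nat.mul_le_mul_right i (by omega)
    have k2 : ((y-i-1)/2 + 1) * i = ((y-i-1)/2)*i + i := by ring
    have k3 : (2*((m-1-i)/2))*i ≤ (m-1-i)*i := Nat.mul_le_mul_right i (by omega)
    have k4 : (2*((m-1-i)/2))*i = 2*(((m-1-i)/2)*i) := by ring
    have key : (i+1)^2 + (m-i)^2 + 2*((m-1-i)*i) ≤ m^2 + 1 := by
      obtain ⟨b, rfl⟩ : ∃ b, m = i + b + 1 := ⟨m-i-1, by omega⟩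
      rw [show i+b+1-i = b+1 by omega, show i+b+1-1-i = b by omega]
      nlinarith [Nat.zero_le (i*b)]
    omega
  · -- B leftover
    have hx_lt : x < i := by omega
    have hy_gt : i < y := by omega
    obtain ⟨r, hr⟩ : ∃ r, m - 1 - i = 2*r+1 := ⟨(m-1-i)/2, by omega⟩
    have hdiv : (m-1-i)/2 = r := by omega
    rw [hdiv]
    have key : (i+1)^2 + (m-i)^2 + 4*(r*i) + 2*i ≤ m^2 + 1 := by
      have hm2 : m = i + 2*r + 2 := by omega
      subst hm2
      rw [show i+2*r+2-i = 2*r+2 by omega]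
      nlinarith [Nat.zero_le (r*i)]
    omega

def Fsym (m i : ℕ) : Sym2 (Fin m) → ℕ :=
  Sym2.lift ⟨fun u v => F0 m i (min u.val v.val) (max u.val v.val), fun u v => by
    simp [min_comm, max_comm]⟩

lemma Fsym_mk (m i : ℕ) (x y : Fin m) (h : (x:ℕ) ≤ (y:ℕ)) :
    Fsym m i (Sym2.mk x y) = F0 m i x y := by
  show F0 m i (min x.val y.val) (max x.val y.val) = F0 m i x y
  rw [min_eq_left h, max_eq_right h]

lemma sym2_repr {m : ℕ} (z : Sym2 (Fin m)) :
    ∃ x y : Fin m, (x:ℕ) ≤ (y:ℕ) ∧ z = Sym2.mk x y := by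
  induction z using Sym2.ind with
  | _ p q =>
    rcases le_total (p:ℕ) (q:ℕ) with h|h
    · exact ⟨p, q, h, rfl⟩
    · exact ⟨q, p, h, Sym2.eq_swap.symm⟩

lemma adj_of (m : ℕ) (i x y x' y' : Fin m) (hxy : (x:ℕ) ≤ (y:ℕ)) (hxy' : (x':ℕ) ≤ (y':ℕ))
    (hxi : x ≠ i) (hyi : y ≠ i) (hxi' : x' ≠ i) (hyi' : y' ≠ i)
    (hne : Sym2.mk x y ≠ Sym2.mk x' y')
    (hF : F0 m i x y = F0 m i x' y') :
    (pairGraph (pathG m)).Adj (Sym2.mk x y) (Sym2.mk x' y') := by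
  have him : (i:ℕ) < m := i.isLt
  have hne2 : ¬((x:ℕ) = (x':ℕ) ∧ (y:ℕ) = (y':ℕ)) := by
    rintro ⟨e1, e2⟩
    exact hne (by rw [Fin.ext e1, Fin.ext e2])
  have hc := core m i x y x' y' him hxy y.isLt (fun h => hxi (Fin.ext h))
    (fun h => hyi (Fin.ext h)) hxy' y'.isLt (fun h => hxi' (Fin.ext h))
    (fun h => hyi' (Fin.ext h)) hne2 hF
  rcases hc with ⟨hxx, hyy⟩ | ⟨hyy, hxx⟩
  · have hx : x = x' := Fin.ext hxx
    subst hx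
    have hpath : (pathG m).Adj y y' := by
      simp only [pathG, SimpleGraph.fromRel_adj]
      exact ⟨fun h => by rw [h] at hyy; omega, hyy⟩
    simp only [pairGraph, SimpleGraph.fromRel_adj]
    exact ⟨hne, Or.inl ⟨x, y, y', hpath, rfl, rfl⟩⟩
  · have hy : y = y' := Fin.ext hyy
    subst hy
    have hpath : (pathG m).Adj x x' := by
      simp only [pathG, SimpleGraph.fromRel_adj]
      exact ⟨fun h => by rw [h] at hxx; omega, hxx⟩
    simp only [pairGraph, SimpleGraph.fromRel_adj]
    exact ⟨hne, Or.inl ⟨y, x, x', hpath, Sym2.eq_swap, Sym2.eq_swap⟩⟩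

/-- For `m ≥ 2` and every `i ∈ {1,…,m}`, deleting from the pair graph `C(P_m)` all
2-multisets containing `i` yields a graph of independence number at most `⌊m²/4⌋ + 1`. -/
theorem indepNum_pairGraph_path_delete_Ri (m : ℕ) (hm : 2 ≤ m) (i : Fin m) :
    indepNum (SimpleGraph.induce {s : Sym2 (Fin m) | i ∉ s} (pairGraph (pathG m))) ≤
      m ^ 2 / 4 + 1 := by
  classical
  apply csSup_le
  · exact ⟨0, ∅, by simp⟩
  · rintro n ⟨s, rfl, hind⟩
    have hcard : s.card ≤ (Finset.range (m^2/4+1)).card := by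
      apply Finset.card_le_card_of_injOn (fun v => Fsym m i v.val)
      · intro v hv
        obtain ⟨x, y, hxy, hrep⟩ := sym2_repr v.val
        have hmem : (i ∉ v.val) := v.property
        rw [hrep] at hmem
        rw [Sym2.mem_iff] at hmem
        push_neg at hmem
        simp only [Finset.mem_coe, Finset.mem_range]
        rw [hrep, Fsym_mk m i x y hxy]
        have := F0_le m (i:ℕ) (x:ℕ) (y:ℕ) i.isLt hxy y.isLt
          (fun h => hmem.1 (Fin.ext h.symm)) (fun h => hmem.2 (Fin.ext h.symm))
        omega
      · intro u hu v hv heq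
        by_contra hneuv
        obtain ⟨x, y, hxy, hrepu⟩ := sym2_repr u.val
        obtain ⟨x', y', hxy', hrepv⟩ := sym2_repr v.val
        have hmu : (i ∉ u.val) := u.property
        have hmv : (i ∉ v.val) := v.property
        rw [hrepu, Sym2.mem_iff] at hmu
        rw [hrepv, Sym2.mem_iff] at hmv
        push_neg at hmu
        push_neg at hmv
        have hneS : Sym2.mk x y ≠ Sym2.mk x' y' := by
          intro h
          apply hneuv
          apply Subtype.ext
          rw [hrepu, hrepv, h]
        have hFeq : F0 m i x y = F0 m i x' y' := by
          have h1 := Fsym_mk m i x y hxy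
          have h2 := Fsym_mk m i x' y' hxy'
          simp only at heq
          rw [hrepu, hrepv, h1, h2] at heq
          exact heq
        have hadj := adj_of m i x y x' y' hxy hxy'
          (fun h => hmu.1 h.symm) (fun h => hmu.2 h.symm)
          (fun h => hmv.1 h.symm) (fun h => hmv.2 h.symm) hneS hFeq
        apply hind u hu v hv
        show (pairGraph (pathG m)).Adj u.val v.val
        rw [hrepu, hrepv]
        exact hadj
    rw [Finset.card_range] at hcard
    exact hcard
end

section
/- Let m ≥ 3 and define, for q = 1,…,m, the sets L_q = {{j, m−(q−j)} : 1 ≤ j ≤ q} of 2-multisets of {1,…,m}. If L_q is not an independent set in the pair graph C(C_m), then m = 2q − 1 (with 2 ≤ q ≤ m−1). -/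
/-- The set `L_q = {{j, m−(q−j)} : 1 ≤ j ≤ q}` of 2-multisets of the vertices of `C_m`,
written with 0-indexed vertices: `L_q = {{t, m−q+t} : 0 ≤ t < q}`. -/
def Lset (m q : ℕ) : Set (Sym2 (Fin m)) :=
  {s | ∃ t, t < q ∧ ∃ (h1 : t < m) (h2 : m - q + t < m),
    s = Sym2.mk (⟨t, h1⟩ : Fin m) (⟨m - q + t, h2⟩ : Fin m)}
/-- If `L_q` (for `1 ≤ q ≤ m`) is not an independent set in the pair graph `C(C_m)`,
then `m = 2q − 1` (and necessarily `2 ≤ q ≤ m − 1`). -/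
theorem Lset_not_indep (m q : ℕ) (hm : 3 ≤ m) (hq1 : 1 ≤ q) (hq2 : q ≤ m)
    (h : ¬ (∀ a ∈ Lset m q, ∀ b ∈ Lset m q, ¬ (pairGraph (cycleG m)).Adj a b)) :
    m = 2 * q - 1 ∧ 2 ≤ q ∧ q ≤ m - 1 := by
  push_neg at h
  obtain ⟨s, hs, t, ht, hadj⟩ := h
  obtain ⟨i, hi, hi1, hi2, rfl⟩ := hs
  obtain ⟨j, hj, hj1, hj2, rfl⟩ := ht
  rw [pairGraph, SimpleGraph.fromRel_adj] at hadj
  obtain ⟨hne, hrel⟩ := hadj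
  have key : ∀ (a x y : Fin m), (cycleG m).Adj x y →
      Sym2.mk (⟨i, hi1⟩ : Fin m) (⟨m - q + i, hi2⟩ : Fin m) = Sym2.mk a x →
      Sym2.mk (⟨j, hj1⟩ : Fin m) (⟨m - q + j, hj2⟩ : Fin m) = Sym2.mk a y →
      m = 2 * q - 1 ∧ 2 ≤ q ∧ q ≤ m - 1 := by
    intro a x y hxy h1 h2
    rw [cycleG, SimpleGraph.fromRel_adj] at hxy
    rw [Sym2.eq_iff] at h1 h2
    obtain ⟨hxyne, hxy⟩ := hxy
    have hx := x.isLt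
    have hy := y.isLt
    have ha := a.isLt
    simp only [Fin.ext_iff, Fin.val_mk, ne_eq] at h1 h2 hxyne
    omega
  rcases hrel with ⟨a, x, y, hxy, h1, h2⟩ | ⟨a, x, y, hxy, h1, h2⟩
  · exact key a x y hxy h1 h2
  · exact key a y x hxy.symm h2 h1
end
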